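/- arXiv:2507.19169 — 7 statements merged into one kernel-verified Lean document; each statement's English description precedes it below -/
import Mathlib

section
/- The following are equivalent: (i) for each bounded Borel function f : S → ℝ the sequence α_n(f) converges in probability; (ii) for each bounded continuous function f : S → ℝ the sequence α_n(f) converges in probability, and in addition lim_n P(X_n ∈ B) exists for every Borel set B ∈ 𝓑. -/
open MeasureTheory ProbabilityTheory Filter Topology
open scoped ENNReal NNReal

set_option maxHeartbeats 1000000
set_option synthInstance.maxHeartbeats 100000

variable {Ω S : Type*}

/-- `Filt X n` is the σ-field `𝓕_n = σ(X_1,…,X_n)` generated by the first `n` variables.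
Indexing convention: `X i` here denotes the paper's `X_{i+1}`, so that `Filt X 0 = ⊥`. -/
def Filt [MeasurableSpace S] (X : ℕ → Ω → S) (n : ℕ) : MeasurableSpace Ω :=
  ⨆ i ∈ Finset.range n, MeasurableSpace.comap (X i) inferInstance

/-- The predictive mean `α_n(f) = E[f(X_{n+1}) ∣ 𝓕_n]` (here the paper's `X_{n+1}` is `X n`). -/
noncomputable def predMean [MeasurableSpace Ω] [MeasurableSpace S]
    (P : Measure Ω) (X : ℕ → Ω → S) (f : S → ℝ) (n : ℕ) : Ω → ℝ :=
  P[(fun ω => f (X n ω)) | Filt X n]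

section Aux
variable [MeasurableSpace Ω] {P : Measure Ω} [IsProbabilityMeasure P]

/-- Clamping to `[-C, C]` moves a point closer to anything in `[-C, C]`. -/
lemma clamp_abs_le {C a b : ℝ} (ha : |a| ≤ C) :
    |max (-C) (min C b) - a| ≤ |b - a| := by
  rw [abs_le] at ha
  rcases le_total b C with h1 | h1
  · rcases le_total (-C) b with h2 | h2
    · rw [min_eq_right h1, max_eq_right h2]
    · rw [min_eq_right h1, max_eq_left h2]
      rw [abs_sub_comm, abs_sub_comm b a]
      rw [abs_of_nonneg (by linarith), abs_of_nonneg (by linarith)]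
      linarith
  · rw [min_eq_left h1, max_eq_right (by linarith)]
    rw [abs_of_nonneg (by linarith), abs_of_nonneg (by linarith)]
    linarith

/-- An L¹-Cauchy sequence of integrable functions converges in measure to some limit,
and the integrals converge too. -/
lemma cauchy_to_lim {F : ℕ → Ω → ℝ} (hFi : ∀ n, Integrable (F n) P)
    (hcau : ∀ ε : ℝ, 0 < ε → ∃ N, ∀ n ≥ N, ∀ m ≥ N, ∫ ω, |F n ω - F m ω| ∂P ≤ ε) :
    ∃ l : Ω → ℝ, TendstoInMeasure P F atTop l ∧
      Tendsto (fun n => ∫ ω, F n ω ∂P) atTop (𝓝 (∫ ω, l ω ∂P)) := by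
  set M : ℕ → Lp ℝ 1 P := fun n => (memLp_one_iff_integrable.2 (hFi n)).toLp (F n) with hM
  have hMcoe : ∀ n, (M n : Ω → ℝ) =ᵐ[P] F n := fun n => MemLp.coeFn_toLp _
  have hdist : ∀ n m, dist (M n) (M m) = ∫ ω, |F n ω - F m ω| ∂P := by
    intro n m
    rw [dist_eq_norm, ← MemLp.toLp_sub, L1.norm_eq_integral_norm]
    refine integral_congr_ae ?_
    filter_upwards [MemLp.coeFn_toLp ((memLp_one_iff_integrable.2 (hFi n)).sub
      (memLp_one_iff_integrable.2 (hFi m)))] with ω hω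
    rw [hω]; simp [Real.norm_eq_abs]
  have hcauM : CauchySeq M := by
    rw [Metric.cauchySeq_iff]
    intro ε hε
    obtain ⟨N, hN⟩ := hcau (ε / 2) (by positivity)
    exact ⟨N, fun m hm n hn => by
      rw [hdist]; exact lt_of_le_of_lt (hN m hm n hn) (by linarith)⟩
  obtain ⟨L, hL⟩ := cauchySeq_tendsto_of_complete hcauM
  have hnorm : Tendsto (fun n => ‖M n - L‖) atTop (𝓝 0) :=
    tendsto_iff_norm_sub_tendsto_zero.1 hL
  have hcoe_sub : ∀ n, (fun ω => F n ω - (L : Ω → ℝ) ω) =ᵐ[P] ((M n - L : Lp ℝ 1 P) : Ω → ℝ) := by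
    intro n
    filter_upwards [hMcoe n, Lp.coeFn_sub (M n) L] with ω h1 h2
    rw [h2, Pi.sub_apply, h1]
  refine ⟨L, ?_, ?_⟩
  · refine tendstoInMeasure_of_tendsto_eLpNorm (p := 1) one_ne_zero
      (fun n => (hFi n).aestronglyMeasurable) (Lp.aestronglyMeasurable L) ?_
    have : ∀ n, eLpNorm (fun ω => F n ω - (L : Ω → ℝ) ω) 1 P = ENNReal.ofReal ‖M n - L‖ := by
      intro n
      rw [eLpNorm_congr_ae (hcoe_sub n), Lp.norm_def,
        ENNReal.ofReal_toReal (Lp.eLpNorm_ne_top _)]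
    have heq : (fun n => eLpNorm (F n - (L : Ω → ℝ)) 1 P)
        = fun n => ENNReal.ofReal ‖M n - L‖ := funext fun n => this n
    rw [heq, show (0 : ℝ≥0∞) = ENNReal.ofReal 0 by simp]
    exact (ENNReal.continuous_ofReal.tendsto 0).comp hnorm
  · have hbound : ∀ n, |∫ ω, F n ω ∂P - ∫ ω, (L : Ω → ℝ) ω ∂P| ≤ ‖M n - L‖ := by
      intro n
      rw [← integral_sub (hFi n) (L1.integrable_coeFn L)]
      calc |∫ ω, (F n ω - (L : Ω → ℝ) ω) ∂P| ≤ ∫ ω, |F n ω - (L : Ω → ℝ) ω| ∂P := by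
            simpa [Real.norm_eq_abs] using
              norm_integral_le_integral_norm (fun ω => F n ω - (L : Ω → ℝ) ω)
      _ = ‖M n - L‖ := by
            rw [L1.norm_eq_integral_norm]
            refine integral_congr_ae ?_
            filter_upwards [hcoe_sub n] with ω hω
            rw [← hω]; simp [Real.norm_eq_abs]
    rw [show (fun n => ∫ ω, F n ω ∂P) = fun n => (∫ ω, F n ω ∂P - ∫ ω, (L : Ω → ℝ) ω ∂P)
        + ∫ ω, (L : Ω → ℝ) ω ∂P from funext fun n => by ring]
    have h1 : Tendsto (fun n => ∫ ω, F n ω ∂P - ∫ ω, (L : Ω → ℝ) ω ∂P) atTop (𝓝 0) := by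
      refine squeeze_zero_norm (fun n => ?_) hnorm
      simpa [Real.norm_eq_abs] using hbound n
    simpa using h1.add (tendsto_const_nhds (x := ∫ ω, (L : Ω → ℝ) ω ∂P) (f := atTop))

/-- A uniformly bounded sequence of strongly measurable functions converging in measure
is L¹-Cauchy. -/
lemma tim_L1_cauchy {F : ℕ → Ω → ℝ} {l : Ω → ℝ} {C : ℝ}
    (hm_1 : ∀ n, StronglyMeasurable (F n)) (hbd : ∀ n, ∀ᵐ ω ∂P, |F n ω| ≤ C)
    (htim : TendstoInMeasure P F atTop l) :
    ∀ ε : ℝ, 0 < ε → ∃ N, ∀ n ≥ N, ∀ m ≥ N, ∫ ω, |F n ω - F m ω| ∂P ≤ ε := by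
  intro ε hε
  set C' : ℝ := max C 0 with hC'
  have hC'0 : 0 ≤ C' := le_max_right _ _
  have hCC' : C ≤ C' := le_max_left _ _
  set δ : ℝ := ε / (8 * (C' + 1)) with hδ
  have hδ0 : 0 < δ := by positivity
  have h4 : 0 < ε / 4 := by positivity
  have h8 : 0 < ε / 8 := by positivity
  have hev := (tendstoInMeasure_iff_dist.1 htim (ε / 8) h8).eventually (gt_mem_nhds (show (0:ℝ≥0∞) < ENNReal.ofReal δ by
    simpa using hδ0))
  obtain ⟨N, hN⟩ := eventually_atTop.1 hev
  refine ⟨N, fun n hn m hm => ?_⟩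
  have hFint : ∀ k, Integrable (F k) P := fun k =>
    ⟨(hm_1 k).aestronglyMeasurable, HasFiniteIntegral.of_bounded (C := C)
      ((hbd k).mono fun ω h => by simpa using h)⟩
  set A : Set Ω := {ω | ε / 4 ≤ |F n ω - F m ω|} with hA
  have hAmeas : MeasurableSet A :=
    measurableSet_le measurable_const ((hm_1 n).measurable.sub (hm_1 m).measurable).abs
  have hsub : A ⊆ {ω | ε / 8 ≤ dist (F n ω) (l ω)} ∪ {ω | ε / 8 ≤ dist (F m ω) (l ω)} := by
    intro ω hω
    by_contra hcon
    rw [Set.mem_union] at hcon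
    push_neg at hcon
    obtain ⟨h1, h2⟩ := hcon
    simp only [Set.mem_setOf_eq, not_le, Real.dist_eq] at h1 h2
    have : |F n ω - F m ω| ≤ |F n ω - l ω| + |F m ω - l ω| := by
      rw [abs_sub_comm (F m ω)]; exact abs_sub_le _ _ _
    have hω' : ε / 4 ≤ |F n ω - F m ω| := hω
    linarith
  have hPA : P A ≤ ENNReal.ofReal (2 * δ) := by
    calc P A ≤ P ({ω | ε / 8 ≤ dist (F n ω) (l ω)} ∪ {ω | ε / 8 ≤ dist (F m ω) (l ω)}) :=
          measure_mono hsub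
    _ ≤ P {ω | ε / 8 ≤ dist (F n ω) (l ω)} + P {ω | ε / 8 ≤ dist (F m ω) (l ω)} :=
          measure_union_le _ _
    _ ≤ ENNReal.ofReal δ + ENNReal.ofReal δ := add_le_add (hN n hn).le (hN m hm).le
    _ = ENNReal.ofReal (2 * δ) := by rw [← ENNReal.ofReal_add hδ0.le hδ0.le]; ring_nf
  have hPAr : (P A).toReal ≤ 2 * δ := by
    refine ENNReal.toReal_le_of_le_ofReal (by positivity) hPA
  have hpt : ∀ᵐ ω ∂P, |F n ω - F m ω| ≤ ε / 4 + A.indicator (fun _ => 2 * C') ω := by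
    filter_upwards [hbd n, hbd m] with ω h1 h2
    by_cases hωA : ω ∈ A
    · rw [Set.indicator_of_mem hωA]
      have : |F n ω - F m ω| ≤ |F n ω| + |F m ω| := abs_sub _ _
      linarith
    · rw [Set.indicator_of_notMem hωA]
      have : ¬(ε / 4 ≤ |F n ω - F m ω|) := hωA
      linarith [not_le.1 this]
  have hint2 : Integrable (fun ω => ε / 4 + A.indicator (fun _ => 2 * C') ω) P :=
    (integrable_const _).add ((integrable_const _).indicator hAmeas)
  calc ∫ ω, |F n ω - F m ω| ∂P ≤ ∫ ω, (ε / 4 + A.indicator (fun _ => 2 * C') ω) ∂P := by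
        refine integral_mono_ae ((hFint n).sub (hFint m)).abs hint2 hpt
  _ = ε / 4 + (2 * C') * (P A).toReal := by
        rw [integral_add (integrable_const _) ((integrable_const _).indicator hAmeas),
          integral_const, integral_indicator_const _ hAmeas]
        simp [mul_comm, measureReal_def]
  _ ≤ ε / 4 + (2 * C') * (2 * δ) := by
        have := mul_le_mul_of_nonneg_left hPAr (by positivity : (0:ℝ) ≤ 2 * C')
        linarith
  _ ≤ ε := by
        rw [hδ]
        have hkey : 2 * C' * (2 * (ε / (8 * (C' + 1)))) ≤ ε / 2 := by
          calc 2 * C' * (2 * (ε / (8 * (C' + 1)))) = 4 * C' * ε / (8 * (C' + 1)) := by ring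
          _ ≤ ε / 2 := by
              rw [div_le_div_iff₀ (by positivity) (by norm_num : (0:ℝ) < 2)]
              nlinarith [hε.le]
        linarith

end Aux

section Pred
variable [MeasurableSpace Ω] [MeasurableSpace S] {P : Measure Ω} [IsProbabilityMeasure P]
  {X : ℕ → Ω → S}

lemma filt_le (hX : ∀ i, Measurable (X i)) (n : ℕ) : Filt X n ≤ ‹MeasurableSpace Ω› :=
  iSup₂_le fun i _ => (hX i).comap_le

lemma integrable_comp (hX : ∀ i, Measurable (X i)) {f : S → ℝ} (hf : Measurable f) {C : ℝ}
    (hC : ∀ x, |f x| ≤ C) (n : ℕ) : Integrable (fun ω => f (X n ω)) P :=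
  ⟨((hf.comp (hX n)).stronglyMeasurable).aestronglyMeasurable,
    HasFiniteIntegral.of_bounded (C := C) (ae_of_all _ fun ω => by
      simpa [Real.norm_eq_abs] using hC (X n ω))⟩

lemma predMean_sm (hX : ∀ i, Measurable (X i)) (f : S → ℝ) (n : ℕ) :
    StronglyMeasurable (predMean P X f n) :=
  stronglyMeasurable_condExp.mono (filt_le hX n)

lemma predMean_bdd (hX : ∀ i, Measurable (X i)) {f : S → ℝ} {C : ℝ}
    (hC : ∀ x, |f x| ≤ C) (n : ℕ) :
    ∀ᵐ ω ∂P, |predMean P X f n ω| ≤ max C 0 := by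
  have : ∀ᵐ ω ∂P, |f (X n ω)| ≤ (C.toNNReal : ℝ) :=
    ae_of_all _ fun ω => (hC (X n ω)).trans (by rw [Real.coe_toNNReal']; exact le_max_left _ _)
  simpa [Real.coe_toNNReal', predMean] using ae_bdd_condExp_of_ae_bdd (R := C.toNNReal) this

lemma predMean_integrable (hX : ∀ i, Measurable (X i)) (f : S → ℝ) (n : ℕ) :
    Integrable (predMean P X f n) P := integrable_condExp

lemma predMean_integral (hX : ∀ i, Measurable (X i)) (f : S → ℝ) (n : ℕ) :
    ∫ ω, predMean P X f n ω ∂P = ∫ ω, f (X n ω) ∂P := by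
  haveI : SigmaFinite (P.trim (filt_le hX n)) := by
    haveI := isFiniteMeasure_trim (μ := P) (filt_le hX n)
    infer_instance
  exact integral_condExp (filt_le hX n)

lemma predMean_L1_diff (hX : ∀ i, Measurable (X i)) {f g : S → ℝ}
    (hf : Measurable f) (hg : Measurable g) {Cf Cg : ℝ}
    (hCf : ∀ x, |f x| ≤ Cf) (hCg : ∀ x, |g x| ≤ Cg) (n : ℕ) :
    ∫ ω, |predMean P X f n ω - predMean P X g n ω| ∂P
      ≤ ∫ ω, |f (X n ω) - g (X n ω)| ∂P := by
  haveI : SigmaFinite (P.trim (filt_le hX n)) := by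
    haveI := isFiniteMeasure_trim (μ := P) (filt_le hX n)
    infer_instance
  have hsub : predMean P X f n - predMean P X g n
      =ᵐ[P] P[(fun ω => f (X n ω)) - (fun ω => g (X n ω)) | Filt X n] :=
    (condExp_sub (integrable_comp hX hf hCf n) (integrable_comp hX hg hCg n) (Filt X n)).symm
  calc ∫ ω, |predMean P X f n ω - predMean P X g n ω| ∂P
      = ∫ ω, |(P[(fun ω => f (X n ω)) - (fun ω => g (X n ω)) | Filt X n]) ω| ∂P := by
        refine integral_congr_ae ?_
        filter_upwards [hsub] with ω hω
        rw [show predMean P X f n ω - predMean P X g n ω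
          = (predMean P X f n - predMean P X g n) ω from rfl, hω]
  _ ≤ ∫ ω, |((fun ω => f (X n ω)) - fun ω => g (X n ω)) ω| ∂P :=
        integral_abs_condExp_le _
  _ = ∫ ω, |f (X n ω) - g (X n ω)| ∂P := by simp

end Pred

section Meas
variable [MeasurableSpace S]

/-- A dominating finite measure for a sequence of probability measures. -/
noncomputable def lamM (μ : ℕ → Measure S) : Measure S :=
  Measure.sum (fun n => ((2 : ℝ≥0∞)⁻¹ ^ (n + 1)) • μ n)

lemma lamM_prob (μ : ℕ → Measure S) [∀ n, IsProbabilityMeasure (μ n)] :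
    IsProbabilityMeasure (lamM μ) := by
  constructor
  rw [lamM, Measure.sum_apply _ MeasurableSet.univ]
  simp only [Measure.smul_apply, measure_univ, smul_eq_mul, mul_one]
  rw [show (fun n : ℕ => ((2 : ℝ≥0∞)⁻¹ ^ (n + 1))) = fun n => (2:ℝ≥0∞)⁻¹ ^ n * 2⁻¹ from
    funext fun n => by rw [pow_succ]]
  rw [ENNReal.tsum_mul_right, ENNReal.tsum_geometric]
  rw [show (1 : ℝ≥0∞) - 2⁻¹ = 2⁻¹ by
    rw [← ENNReal.inv_two_add_inv_two, ENNReal.add_sub_cancel_right (by norm_num)]]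
  rw [inv_inv, ENNReal.mul_inv_cancel (by norm_num) (by norm_num)]

lemma lamM_le (μ : ℕ → Measure S) (n : ℕ) : μ n ≤ ((2 : ℝ≥0∞) ^ (n + 1)) • lamM μ := by
  intro s
  have h1 : (((2 : ℝ≥0∞)⁻¹ ^ (n + 1)) • μ n) s ≤ lamM μ s := Measure.le_sum _ n s
  rw [Measure.smul_apply, smul_eq_mul] at h1
  rw [Measure.smul_apply, smul_eq_mul]
  calc μ n s = (2 : ℝ≥0∞) ^ (n + 1) * ((2 : ℝ≥0∞)⁻¹ ^ (n + 1) * μ n s) := by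
        rw [← mul_assoc, ← mul_pow, ENNReal.mul_inv_cancel (by norm_num) (by norm_num),
          one_pow, one_mul]
  _ ≤ (2 : ℝ≥0∞) ^ (n + 1) * lamM μ s := mul_le_mul_right h1 _

lemma lamM_ac (μ : ℕ → Measure S) (n : ℕ) : μ n ≪ lamM μ := by
  intro s hs
  have := lamM_le μ n s
  rw [Measure.smul_apply, smul_eq_mul, hs, mul_zero] at this
  exact le_antisymm this zero_le

lemma lamM_integrable (μ : ℕ → Measure S) {h : S → ℝ} (hh : Integrable h (lamM μ)) (n : ℕ) :
    Integrable h (μ n) :=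
  (hh.smul_measure (c := (2 : ℝ≥0∞) ^ (n + 1)) (by simp)).mono_measure (lamM_le μ n)

lemma lamM_apply_le (μ : ℕ → Measure S) (n : ℕ) (s : Set S) :
    μ n s ≤ (2 : ℝ≥0∞) ^ (n + 1) * lamM μ s := by
  have := lamM_le μ n s
  rwa [Measure.smul_apply, smul_eq_mul] at this

end Meas

section UAC
variable [MeasurableSpace S]

/-- The `L¹` element corresponding to an indicator function. -/
noncomputable def indLp (ν : Measure S) [IsFiniteMeasure ν] {A : Set S}
    (hA : MeasurableSet A) : Lp ℝ 1 ν :=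
  (memLp_one_iff_integrable.2 ((integrable_const (1 : ℝ)).indicator hA)).toLp (A.indicator 1)

lemma indLp_coe (ν : Measure S) [IsFiniteMeasure ν] {A : Set S} (hA : MeasurableSet A) :
    (indLp ν hA : S → ℝ) =ᵐ[ν] A.indicator 1 :=
  MemLp.coeFn_toLp _

/-- Uniform absolute continuity of a setwise convergent sequence of probability measures with
respect to the dominating measure `lamM μ`, via the Baire category theorem
(Vitali–Hahn–Saks style argument). -/
lemma uac (μ : ℕ → Measure S) [∀ n, IsProbabilityMeasure (μ n)]
    (hconv : ∀ B : Set S, MeasurableSet B →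
      ∃ L : ℝ, Tendsto (fun n => ((μ n) B).toReal) atTop (𝓝 L)) :
    ∀ ε : ℝ, 0 < ε → ∃ δ : ℝ, 0 < δ ∧ ∀ B, MeasurableSet B →
      lamM μ B ≤ ENNReal.ofReal δ → ∀ n, ((μ n) B).toReal ≤ ε := by
  intro ε hε
  haveI := lamM_prob μ
  set Lam := lamM μ with hLam
  set φ : ℕ → Lp ℝ 1 Lam → ℝ := fun n F => ∫ x, F x ∂(μ n) with hφ
  have hφlip : ∀ n (F G : Lp ℝ 1 Lam), |φ n F - φ n G| ≤ (2 : ℝ) ^ (n + 1) * ‖F - G‖ := by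
    intro n F G
    have hintF : Integrable (F : S → ℝ) (μ n) := lamM_integrable μ (L1.integrable_coeFn F) n
    have hintG : Integrable (G : S → ℝ) (μ n) := lamM_integrable μ (L1.integrable_coeFn G) n
    have h1 : φ n F - φ n G = ∫ x, (F x - G x) ∂(μ n) := (integral_sub hintF hintG).symm
    rw [h1]
    have h2 : |∫ x, (F x - G x) ∂(μ n)| ≤ ∫ x, ‖F x - G x‖ ∂(μ n) := by
      simpa [Real.norm_eq_abs] using norm_integral_le_integral_norm (fun x => F x - G x)
    refine h2.trans ?_
    have hnn : Integrable (fun x => ‖F x - G x‖) (((2 : ℝ≥0∞) ^ (n + 1)) • Lam) :=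
      (((L1.integrable_coeFn F).sub (L1.integrable_coeFn G)).norm).smul_measure (by simp)
    calc ∫ x, ‖F x - G x‖ ∂(μ n) ≤ ∫ x, ‖F x - G x‖ ∂(((2 : ℝ≥0∞) ^ (n + 1)) • Lam) :=
          integral_mono_measure (lamM_le μ n) (ae_of_all _ fun x => norm_nonneg _) hnn
    _ = ((2 : ℝ≥0∞) ^ (n + 1)).toReal * ∫ x, ‖F x - G x‖ ∂Lam := by
          rw [integral_smul_measure]; rfl
    _ = (2 : ℝ) ^ (n + 1) * ‖F - G‖ := by
          rw [L1.norm_eq_integral_norm,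
            show ((2 : ℝ≥0∞) ^ (n + 1)).toReal = (2 : ℝ) ^ (n + 1) by
              simp [ENNReal.toReal_pow]]
          congr 1
          refine (integral_congr_ae ?_).symm
          filter_upwards [Lp.coeFn_sub F G] with x hx
          rw [hx]; rfl
  have hφcont : ∀ n, Continuous (φ n) := by
    intro n
    refine (LipschitzWith.of_dist_le_mul (K := (2 : ℝ≥0) ^ (n + 1)) (f := φ n) ?_).continuous
    intro F G
    rw [Real.dist_eq, dist_eq_norm]
    have : (((2 : ℝ≥0) ^ (n + 1) : ℝ≥0) : ℝ) = (2 : ℝ) ^ (n + 1) := by push_cast; ring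
    rw [this]
    exact hφlip n F G
  set K : Set (Lp ℝ 1 Lam) := {F | ∃ A, MeasurableSet A ∧ (F : S → ℝ) =ᵐ[Lam] A.indicator 1}
    with hK
  have hKind : ∀ {A : Set S} (hA : MeasurableSet A), indLp Lam hA ∈ K :=
    fun hA => ⟨_, hA, indLp_coe _ hA⟩
  have hφind : ∀ (n : ℕ) {A : Set S}, MeasurableSet A → ∀ (F : Lp ℝ 1 Lam),
      ((F : S → ℝ) =ᵐ[Lam] A.indicator 1) → φ n F = ((μ n) A).toReal := by
    intro n A hA F hFA
    have hae : (F : S → ℝ) =ᵐ[μ n] A.indicator 1 := hFA.filter_mono (lamM_ac μ n).ae_le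
    calc φ n F = ∫ x, A.indicator 1 x ∂(μ n) := integral_congr_ae hae
    _ = ((μ n) A).toReal := by
          rw [show (A.indicator 1 : S → ℝ) = A.indicator (fun _ => (1:ℝ)) from rfl,
            integral_indicator_const (1 : ℝ) hA]
          simp [measureReal_def]
  have hKclosed : IsClosed K := by
    refine IsSeqClosed.isClosed ?_
    intro F G hF hFG
    have htim : TendstoInMeasure Lam (fun j => (F j : S → ℝ)) atTop (G : S → ℝ) := by
      refine tendstoInMeasure_of_tendsto_eLpNorm (p := 1) one_ne_zero
        (fun j => Lp.aestronglyMeasurable _) (Lp.aestronglyMeasurable _) ?_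
      have heq : (fun j => eLpNorm ((F j : S → ℝ) - (G : S → ℝ)) 1 Lam)
          = fun j => ENNReal.ofReal ‖F j - G‖ := by
        funext j
        rw [eLpNorm_congr_ae (Lp.coeFn_sub (F j) G).symm, Lp.norm_def,
          ENNReal.ofReal_toReal (Lp.eLpNorm_ne_top _)]
      rw [heq, show (0 : ℝ≥0∞) = ENNReal.ofReal 0 by simp]
      exact (ENNReal.continuous_ofReal.tendsto 0).comp
        (tendsto_iff_norm_sub_tendsto_zero.1 hFG)
    obtain ⟨ns, -, hae⟩ := htim.exists_seq_tendsto_ae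
    have h01 : ∀ j, ∀ᵐ x ∂Lam, (F j : S → ℝ) x = 0 ∨ (F j : S → ℝ) x = 1 := by
      intro j
      obtain ⟨A, hA, hFA⟩ := hF j
      filter_upwards [hFA] with x hx
      rw [hx]
      by_cases hxA : x ∈ A
      · right; simp [hxA]
      · left; simp [hxA]
    have hG01 : ∀ᵐ x ∂Lam, (G : S → ℝ) x = 0 ∨ (G : S → ℝ) x = 1 := by
      filter_upwards [ae_all_iff.2 fun j => h01 (ns j), hae] with x hx htend
      have hmem : ∀ j, (F (ns j) : S → ℝ) x ∈ ({0, 1} : Set ℝ) := by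
        intro j; rcases hx j with h | h <;> simp [h]
      have hclosed : IsClosed ({0, 1} : Set ℝ) :=
        ((Set.finite_singleton 1).insert 0).isClosed
      have := hclosed.mem_of_tendsto htend (Eventually.of_forall hmem)
      simpa using this
    set G' := (Lp.aestronglyMeasurable G).mk _ with hG'
    have hGmk : (G : S → ℝ) =ᵐ[Lam] G' := (Lp.aestronglyMeasurable G).ae_eq_mk
    refine ⟨G' ⁻¹' {1},
      (Lp.aestronglyMeasurable G).stronglyMeasurable_mk.measurable (measurableSet_singleton 1),
      ?_⟩
    filter_upwards [hG01, hGmk] with x hx hmk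
    by_cases hx1 : G' x = 1
    · have hmem : x ∈ G' ⁻¹' {1} := by simp [hx1]
      rw [Set.indicator_of_mem hmem, hmk, hx1]; rfl
    · have hmem : x ∉ G' ⁻¹' {1} := by simp [hx1]
      rw [Set.indicator_of_notMem hmem]
      rcases hx with h0 | h1
      · exact h0
      · exact absurd (hmk ▸ h1) hx1
  haveI : CompleteSpace K := hKclosed.completeSpace_coe
  haveI : Nonempty K := ⟨⟨indLp Lam MeasurableSet.empty, hKind MeasurableSet.empty⟩⟩
  set ψ : ℕ → K → ℝ := fun n F => φ n F.1 with hψ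
  have hψcont : ∀ n, Continuous (ψ n) := fun n => (hφcont n).comp continuous_subtype_val
  set Cs : ℕ → Set K := fun N => ⋂ (n : ℕ) (m : ℕ),
    {F : K | N ≤ n → N ≤ m → |ψ n F - ψ m F| ≤ ε / 4} with hCs
  have hCclosed : ∀ N, IsClosed (Cs N) := by
    intro N
    refine isClosed_iInter fun n => isClosed_iInter fun m => ?_
    by_cases hn : N ≤ n
    · by_cases hm : N ≤ m
      · have heq : {F : K | N ≤ n → N ≤ m → |ψ n F - ψ m F| ≤ ε / 4}
            = {F : K | |ψ n F - ψ m F| ≤ ε / 4} := by ext F; simp [hn, hm]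
        rw [heq]
        exact isClosed_le (continuous_abs.comp ((hψcont n).sub (hψcont m))) continuous_const
      · have heq : {F : K | N ≤ n → N ≤ m → |ψ n F - ψ m F| ≤ ε / 4} = Set.univ := by
          ext F; simp [hm]
        rw [heq]; exact isClosed_univ
    · have heq : {F : K | N ≤ n → N ≤ m → |ψ n F - ψ m F| ≤ ε / 4} = Set.univ := by
        ext F; simp [hn]
      rw [heq]; exact isClosed_univ
  have hCunion : ⋃ N, Cs N = Set.univ := by
    rw [Set.eq_univ_iff_forall]
    intro F
    obtain ⟨A, hA, hFA⟩ := F.2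
    have hval : ∀ n, ψ n F = ((μ n) A).toReal := fun n => hφind n hA F.1 hFA
    obtain ⟨L, hL⟩ := hconv A hA
    have hcauchy := hL.cauchySeq
    rw [Metric.cauchySeq_iff] at hcauchy
    obtain ⟨N, hN⟩ := hcauchy (ε / 4) (by positivity)
    refine Set.mem_iUnion.2 ⟨N, ?_⟩
    refine Set.mem_iInter.2 fun n => Set.mem_iInter.2 fun m => ?_
    intro hn hm
    show |ψ n F - ψ m F| ≤ ε / 4
    rw [hval n, hval m]
    have := hN n hn m hm
    rw [Real.dist_eq] at this
    exact this.le
  obtain ⟨N, hNne⟩ := nonempty_interior_of_iUnion_of_closed hCclosed hCunion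
  obtain ⟨F₀, hF₀⟩ := hNne
  obtain ⟨r, hr, hball⟩ := Metric.mem_nhds_iff.1 (mem_interior_iff_mem_nhds.1 hF₀)
  have hball' : Metric.ball F₀ r ⊆ Cs N := hball
  obtain ⟨A₀, hA₀, hFA₀⟩ := F₀.2
  set δ : ℝ := min (r / 2) ((ε / 4) / (2 : ℝ) ^ (N + 1)) with hδdef
  have hδpos : 0 < δ := lt_min (by positivity) (by positivity)
  refine ⟨δ, hδpos, ?_⟩
  intro B hB hBle n
  have hLamB : (Lam B).toReal ≤ δ := ENNReal.toReal_le_of_le_ofReal hδpos.le hBle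
  have hLamBnn : 0 ≤ (Lam B).toReal := ENNReal.toReal_nonneg
  -- distance of indicator Lp elements to F₀
  have hdist : ∀ {A : Set S} (hA : MeasurableSet A), ((A \ A₀) ∪ (A₀ \ A)) ⊆ B →
      dist (indLp Lam hA) (F₀ : Lp ℝ 1 Lam) ≤ (Lam B).toReal := by
    intro A hA hsub
    rw [dist_eq_norm, L1.norm_eq_integral_norm]
    have hint1 : Integrable (fun x => ‖A.indicator (1 : S → ℝ) x - A₀.indicator 1 x‖) Lam :=
      (((integrable_const (1:ℝ)).indicator hA).sub ((integrable_const (1:ℝ)).indicator hA₀)).norm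
    calc ∫ x, ‖(indLp Lam hA - (F₀ : Lp ℝ 1 Lam) : Lp ℝ 1 Lam) x‖ ∂Lam
        = ∫ x, ‖A.indicator (1 : S → ℝ) x - A₀.indicator 1 x‖ ∂Lam := by
          refine integral_congr_ae ?_
          filter_upwards [Lp.coeFn_sub (indLp Lam hA) (F₀ : Lp ℝ 1 Lam), indLp_coe Lam hA,
            hFA₀] with x h1 h2 h3
          rw [h1, Pi.sub_apply, h2, h3]
    _ ≤ ∫ x, B.indicator (1 : S → ℝ) x ∂Lam := by
          refine integral_mono_ae hint1 ((integrable_const (1:ℝ)).indicator hB)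
            (ae_of_all _ fun x => ?_)
          by_cases hxA : x ∈ A <;> by_cases hxA₀ : x ∈ A₀
          · simp [Set.indicator_of_mem, hxA, hxA₀, Set.indicator_nonneg]
          · have hxB : x ∈ B := hsub (Or.inl ⟨hxA, hxA₀⟩)
            simp [hxA, hxA₀, hxB]
          · have hxB : x ∈ B := hsub (Or.inr ⟨hxA₀, hxA⟩)
            simp [hxA, hxA₀, hxB]
          · simp [hxA, hxA₀, Set.indicator_nonneg]
    _ = (Lam B).toReal := by
          rw [show (B.indicator 1 : S → ℝ) = B.indicator (fun _ => (1:ℝ)) from rfl,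
            integral_indicator_const (1 : ℝ) hB]
          simp [measureReal_def]
  have hmem : ∀ {A : Set S} (hA : MeasurableSet A), ((A \ A₀) ∪ (A₀ \ A)) ⊆ B →
      (⟨indLp Lam hA, hKind hA⟩ : K) ∈ Cs N := by
    intro A hA hsub
    refine hball' ?_
    rw [Metric.mem_ball, Subtype.dist_eq]
    calc dist (indLp Lam hA) (F₀ : Lp ℝ 1 Lam) ≤ (Lam B).toReal := hdist hA hsub
    _ ≤ δ := hLamB
    _ ≤ r / 2 := min_le_left _ _
    _ < r := by linarith
  have hCs_val : ∀ {A : Set S} (hA : MeasurableSet A), ((A \ A₀) ∪ (A₀ \ A)) ⊆ B →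
      ∀ k, N ≤ k → |((μ k) A).toReal - ((μ N) A).toReal| ≤ ε / 4 := by
    intro A hA hsub k hk
    have hmemA := hmem hA hsub
    rw [hCs] at hmemA
    have := Set.mem_iInter.1 (Set.mem_iInter.1 hmemA k) N hk le_rfl
    have hcoe : ∀ j, ψ j (⟨indLp Lam hA, hKind hA⟩ : K) = ((μ j) A).toReal :=
      fun j => hφind j hA (indLp Lam hA) (indLp_coe Lam hA)
    rwa [hcoe k, hcoe N] at this
  -- pointwise domination by Lam
  have hpow : ∀ k, ((μ k) B).toReal ≤ (2 : ℝ) ^ (k + 1) * (Lam B).toReal := by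
    intro k
    have h := lamM_apply_le μ k B
    have h2 : ((μ k) B).toReal ≤ (((2 : ℝ≥0∞) ^ (k + 1)) * Lam B).toReal :=
      ENNReal.toReal_mono (ENNReal.mul_ne_top (by simp) (measure_ne_top Lam B)) h
    simpa [ENNReal.toReal_mul, ENNReal.toReal_pow] using h2
  have hδbound : ∀ k, k ≤ N → ((μ k) B).toReal ≤ ε / 4 := by
    intro k hk
    calc ((μ k) B).toReal ≤ (2 : ℝ) ^ (k + 1) * (Lam B).toReal := hpow k
    _ ≤ (2 : ℝ) ^ (N + 1) * (Lam B).toReal := by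
          refine mul_le_mul_of_nonneg_right ?_ hLamBnn
          exact pow_le_pow_right₀ (by norm_num) (by omega)
    _ ≤ (2 : ℝ) ^ (N + 1) * ((ε / 4) / (2 : ℝ) ^ (N + 1)) := by
          refine mul_le_mul_of_nonneg_left (hLamB.trans (min_le_right _ _)) (by positivity)
    _ = ε / 4 := by field_simp
  rcases le_or_gt n N with hn | hn
  · exact (hδbound n hn).trans (by linarith)
  · -- n > N : use the oscillation bound
    have hsub1 : (((A₀ ∪ B) \ A₀) ∪ (A₀ \ (A₀ ∪ B))) ⊆ B := by
      intro x hx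
      rcases hx with h | h
      · exact h.1.resolve_left h.2
      · exact absurd (Or.inl h.1) h.2
    have hsub2 : (((A₀ \ B) \ A₀) ∪ (A₀ \ (A₀ \ B))) ⊆ B := by
      intro x hx
      rcases hx with h | h
      · exact absurd h.1.1 h.2
      · by_contra hxB
        exact h.2 ⟨h.1, hxB⟩
    have h1 := hCs_val (hA₀.union hB) hsub1 n hn.le
    have h2 := hCs_val (hA₀.diff hB) hsub2 n hn.le
    have hdecomp : ∀ k, ((μ k) (A₀ ∪ B)).toReal
        = ((μ k) (A₀ \ B)).toReal + ((μ k) B).toReal := by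
      intro k
      have hsetEq : A₀ ∪ B = (A₀ \ B) ∪ B := by
        ext x; simp only [Set.mem_union, Set.mem_diff]; tauto
      have hdisj : Disjoint (A₀ \ B) B := Set.disjoint_sdiff_left
      rw [hsetEq, measure_union hdisj hB,
        ENNReal.toReal_add (measure_ne_top _ _) (measure_ne_top _ _)]
    have hNB := hδbound N le_rfl
    have hnB := hdecomp n
    have hNB' := hdecomp N
    have hnn : 0 ≤ ((μ n) B).toReal := ENNReal.toReal_nonneg
    have habs1 := abs_le.1 h1
    have habs2 := abs_le.1 h2
    have : ((μ n) B).toReal ≤ ((μ N) B).toReal + ε / 2 := by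
      have e1 : ((μ n) B).toReal = ((μ n) (A₀ ∪ B)).toReal - ((μ n) (A₀ \ B)).toReal := by
        rw [hnB]; ring
      have e2 : ((μ N) B).toReal = ((μ N) (A₀ ∪ B)).toReal - ((μ N) (A₀ \ B)).toReal := by
        rw [hNB']; ring
      rw [e1, e2]
      linarith [habs1.1, habs1.2, habs2.1, habs2.2]
    linarith
end UAC

section Approx
variable [TopologicalSpace S] [PolishSpace S] [MeasurableSpace S] [BorelSpace S]

lemma approx (μ : ℕ → Measure S) [∀ n, IsProbabilityMeasure (μ n)]
    (hconv : ∀ B : Set S, MeasurableSet B →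
      ∃ L : ℝ, Tendsto (fun n => ((μ n) B).toReal) atTop (𝓝 L))
    {f : S → ℝ} (hf : Measurable f) {C : ℝ} (hC0 : 0 ≤ C) (hC : ∀ x, |f x| ≤ C) :
    ∀ ε : ℝ, 0 < ε → ∃ g : S → ℝ, Continuous g ∧ (∀ x, |g x| ≤ C) ∧
      ∀ n, ∫ x, |f x - g x| ∂(μ n) ≤ ε := by
  intro ε hε
  haveI := lamM_prob μ
  set Lam := lamM μ with hLamdef
  obtain ⟨δ, hδpos, hδ⟩ := uac μ hconv (ε / (2 * (2 * C + 1))) (by positivity)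
  letI := TopologicalSpace.upgradeIsCompletelyMetrizable S
  have hfint : Integrable f Lam := ⟨hf.stronglyMeasurable.aestronglyMeasurable,
    HasFiniteIntegral.of_bounded (C := C) (ae_of_all _ fun x => by
      simpa [Real.norm_eq_abs] using hC x)⟩
  obtain ⟨g₀, hg₀, hg₀int⟩ := hfint.exists_boundedContinuous_integral_sub_le
    (show (0:ℝ) < (ε / 2) * δ by positivity)
  set g : S → ℝ := fun x => max (-C) (min C (g₀ x)) with hgdef
  have hgcont : Continuous g := continuous_const.max (continuous_const.min g₀.continuous)
  have hgbd : ∀ x, |g x| ≤ C := by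
    intro x
    rw [abs_le]
    refine ⟨le_max_left _ _, ?_⟩
    rw [max_le_iff]
    exact ⟨by linarith, (min_le_left _ _)⟩
  have hfg : ∀ x, |f x - g x| ≤ |f x - g₀ x| := by
    intro x
    rw [abs_sub_comm, abs_sub_comm (f x)]
    exact clamp_abs_le (hC x)
  have hgint : Integrable g Lam := ⟨hgcont.measurable.stronglyMeasurable.aestronglyMeasurable,
    HasFiniteIntegral.of_bounded (C := C) (ae_of_all _ fun x => by
      simpa [Real.norm_eq_abs] using hgbd x)⟩
  set A : Set S := {x | ε / 2 ≤ |f x - g x|} with hAdef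
  have hAmeas : MeasurableSet A :=
    measurableSet_le measurable_const (hf.sub hgcont.measurable).abs
  have hfg_int : Integrable (fun x => |f x - g x|) Lam := (hfint.sub hgint).abs
  have hintle : ∫ x, |f x - g x| ∂Lam ≤ (ε / 2) * δ := by
    refine le_trans (integral_mono hfg_int (hfint.sub hg₀int).abs hfg) ?_
    calc ∫ x, |f x - g₀ x| ∂Lam = ∫ x, ‖f x - g₀ x‖ ∂Lam := by
          simp [Real.norm_eq_abs]
    _ ≤ (ε / 2) * δ := hg₀
  have hLamA : Lam A ≤ ENNReal.ofReal δ := by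
    have hmarkov := mul_meas_ge_le_integral_of_nonneg
      (μ := Lam) (f := fun x => |f x - g x|)
      (ae_of_all _ fun x => abs_nonneg _) hfg_int (ε / 2)
    have h1 : (ε / 2) * (Lam A).toReal ≤ (ε / 2) * δ := hmarkov.trans hintle
    have h2 : (Lam A).toReal ≤ δ := le_of_mul_le_mul_left h1 (by positivity)
    rw [ENNReal.le_ofReal_iff_toReal_le (measure_ne_top _ _) hδpos.le]
    exact h2
  refine ⟨g, hgcont, hgbd, fun n => ?_⟩
  have hAn := hδ A hAmeas hLamA n
  have hptwise : ∀ᵐ x ∂(μ n), |f x - g x| ≤ ε / 2 + A.indicator (fun _ => 2 * C) x := by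
    refine ae_of_all _ fun x => ?_
    by_cases hxA : x ∈ A
    · rw [Set.indicator_of_mem hxA]
      have h1 := hC x
      have h2 := hgbd x
      have := abs_sub (f x) (g x)
      rw [abs_le] at h1 h2
      have habs : |f x - g x| ≤ |f x| + |g x| := abs_sub _ _
      rw [abs_le] at *
      constructor <;> [linarith [habs.1]; linarith [habs.2]]
    · rw [Set.indicator_of_notMem hxA]
      have : ¬ (ε / 2 ≤ |f x - g x|) := hxA
      linarith [not_le.1 this]
  have hfgn : Integrable (fun x => |f x - g x|) (μ n) :=
    ⟨((hf.sub hgcont.measurable).abs).stronglyMeasurable.aestronglyMeasurable,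
      HasFiniteIntegral.of_bounded (C := 2 * C) (ae_of_all _ fun x => by
        have h1 := hC x; have h2 := hgbd x
        have habs : |f x - g x| ≤ |f x| + |g x| := abs_sub _ _
        simp only [Real.norm_eq_abs, abs_abs]
        linarith)⟩
  calc ∫ x, |f x - g x| ∂(μ n) ≤ ∫ x, (ε / 2 + A.indicator (fun _ => 2 * C) x) ∂(μ n) :=
        integral_mono_ae hfgn
          ((integrable_const _).add ((integrable_const _).indicator hAmeas)) hptwise
  _ = ε / 2 + (2 * C) * ((μ n) A).toReal := by
        rw [integral_add (integrable_const _) ((integrable_const _).indicator hAmeas),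
          integral_const, integral_indicator_const _ hAmeas]
        simp [mul_comm, measureReal_def]
  _ ≤ ε / 2 + (2 * C) * (ε / (2 * (2 * C + 1))) := by
        have := mul_le_mul_of_nonneg_left hAn (by positivity : (0:ℝ) ≤ 2 * C)
        linarith
  _ ≤ ε := by
        have h1 : (2 * C) * (ε / (2 * (2 * C + 1))) ≤ ε / 2 := by
          rw [mul_div_assoc']
          rw [div_le_div_iff₀ (by positivity) (by norm_num)]
          nlinarith
        linarith

end Approx

/-- `α_n(f)` converges in probability for each bounded Borel `f` iff it does so
for each bounded continuous `f` and, in addition, `lim_n P(X_n ∈ B)` exists for every Borel `B`. -/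
theorem stmt2 [MeasurableSpace Ω]
    [TopologicalSpace S] [PolishSpace S] [MeasurableSpace S] [BorelSpace S]
    (P : Measure Ω) [IsProbabilityMeasure P]
    (X : ℕ → Ω → S) (hX : ∀ i, Measurable (X i)) :
    (∀ f : S → ℝ, Measurable f → (∃ C, ∀ x, |f x| ≤ C) →
      ∃ l : Ω → ℝ, TendstoInMeasure P (fun n => predMean P X f n) atTop l) ↔
    ((∀ f : S → ℝ, Continuous f → (∃ C, ∀ x, |f x| ≤ C) →
        ∃ l : Ω → ℝ, TendstoInMeasure P (fun n => predMean P X f n) atTop l) ∧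
      (∀ B : Set S, MeasurableSet B →
        ∃ L : ℝ, Tendsto (fun n => (P (X n ⁻¹' B)).toReal) atTop (𝓝 L))) := by
  constructor
  · intro hi
    refine ⟨fun g hgc hgb => hi g hgc.measurable hgb, ?_⟩
    intro B hB
    set f : S → ℝ := B.indicator (fun _ => 1) with hfdef
    have hfm : Measurable f := measurable_const.indicator hB
    have hfb : ∀ x, |f x| ≤ 1 := by
      intro x
      by_cases hx : x ∈ B
      · simp [hfdef, hx]
      · simp [hfdef, hx]
    obtain ⟨l, htim⟩ := hi f hfm ⟨1, hfb⟩
    have hcau := tim_L1_cauchy (P := P) (predMean_sm hX f)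
      (fun n => predMean_bdd hX hfb n) htim
    obtain ⟨l', htim', hint⟩ := cauchy_to_lim (fun n => predMean_integrable hX f n) hcau
    refine ⟨∫ ω, l' ω ∂P, ?_⟩
    have hval : ∀ n, ∫ ω, predMean P X f n ω ∂P = (P (X n ⁻¹' B)).toReal := by
      intro n
      rw [predMean_integral hX f n]
      have heq : (fun ω => f (X n ω)) = (X n ⁻¹' B).indicator (fun _ => (1 : ℝ)) := by
        funext ω
        by_cases hω : X n ω ∈ B
        · simp [hfdef, hω, Set.indicator_of_mem, Set.mem_preimage]
        · simp [hfdef, hω, Set.mem_preimage]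
      rw [heq, integral_indicator_const (1 : ℝ) (hX n hB)]
      simp [measureReal_def]
    have heq2 : (fun n => (P (X n ⁻¹' B)).toReal)
        = fun n => ∫ ω, predMean P X f n ω ∂P := funext fun n => (hval n).symm
    rw [heq2]
    exact hint
  · rintro ⟨hc, hB⟩ f hfm ⟨C₀, hC₀⟩
    set C : ℝ := max C₀ 0 with hCdef
    have hC0 : 0 ≤ C := le_max_right _ _
    have hC : ∀ x, |f x| ≤ C := fun x => (hC₀ x).trans (le_max_left _ _)
    set μM : ℕ → Measure S := fun n => P.map (X n) with hμM
    haveI : ∀ n, IsProbabilityMeasure (μM n) := fun n =>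
      Measure.isProbabilityMeasure_map (hX n).aemeasurable
    have hconv : ∀ Bs : Set S, MeasurableSet Bs →
        ∃ L, Tendsto (fun n => ((μM n) Bs).toReal) atTop (𝓝 L) := by
      intro Bs hBs
      obtain ⟨L, hL⟩ := hB Bs hBs
      refine ⟨L, ?_⟩
      have hval : ∀ n, ((μM n) Bs).toReal = (P (X n ⁻¹' Bs)).toReal := fun n => by
        rw [hμM, Measure.map_apply (hX n) hBs]
      rw [funext hval]
      exact hL
    have hcau : ∀ ε : ℝ, 0 < ε → ∃ N, ∀ n ≥ N, ∀ m ≥ N,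
        ∫ ω, |predMean P X f n ω - predMean P X f m ω| ∂P ≤ ε := by
      intro ε hε
      obtain ⟨g, hgc, hgb, hgap⟩ := approx μM hconv hfm hC0 hC (ε / 4) (by positivity)
      obtain ⟨lg, htimg⟩ := hc g hgc ⟨C, hgb⟩
      obtain ⟨N, hN⟩ := tim_L1_cauchy (P := P) (predMean_sm hX g)
        (fun n => predMean_bdd hX hgb n) htimg (ε / 2) (by positivity)
      refine ⟨N, fun n hn m hm => ?_⟩
      have hdiff : ∀ k, ∫ ω, |predMean P X f k ω - predMean P X g k ω| ∂P ≤ ε / 4 := by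
        intro k
        refine (predMean_L1_diff hX hfm hgc.measurable hC hgb k).trans ?_
        have hmap : ∫ x, |f x - g x| ∂(μM k) = ∫ ω, |f (X k ω) - g (X k ω)| ∂P := by
          rw [hμM]
          exact integral_map (hX k).aemeasurable
            ((hfm.sub hgc.measurable).abs).stronglyMeasurable.aestronglyMeasurable
        rw [← hmap]
        exact hgap k
      have int1 : ∀ k j, Integrable
          (fun ω => |predMean P X f k ω - predMean P X g j ω|) P :=
        fun k j => ((predMean_integrable hX f k).sub (predMean_integrable hX g j)).abs
      have int2 : Integrable
          (fun ω => |predMean P X g n ω - predMean P X g m ω|) P :=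
        ((predMean_integrable hX g n).sub (predMean_integrable hX g m)).abs
      have int3 : Integrable
          (fun ω => |predMean P X f n ω - predMean P X f m ω|) P :=
        ((predMean_integrable hX f n).sub (predMean_integrable hX f m)).abs
      have htri : ∀ᵐ ω ∂P, |predMean P X f n ω - predMean P X f m ω| ≤
          |predMean P X f n ω - predMean P X g n ω|
          + |predMean P X g n ω - predMean P X g m ω|
          + |predMean P X g m ω - predMean P X f m ω| := by
        refine ae_of_all _ fun ω => ?_
        calc |predMean P X f n ω - predMean P X f m ω|
            ≤ |predMean P X f n ω - predMean P X g n ω|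
              + |predMean P X g n ω - predMean P X f m ω| := abs_sub_le _ _ _
        _ ≤ |predMean P X f n ω - predMean P X g n ω|
              + (|predMean P X g n ω - predMean P X g m ω|
                + |predMean P X g m ω - predMean P X f m ω|) := by
              linarith [abs_sub_le (predMean P X g n ω) (predMean P X g m ω)
                (predMean P X f m ω)]
        _ = _ := by ring
      have intgm : Integrable
          (fun ω => |predMean P X g m ω - predMean P X f m ω|) P :=
        ((predMean_integrable hX g m).sub (predMean_integrable hX f m)).abs
      have intsum : Integrable (fun ω => |predMean P X f n ω - predMean P X g n ω|
          + |predMean P X g n ω - predMean P X g m ω|) P := (int1 n n).add int2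
      calc ∫ ω, |predMean P X f n ω - predMean P X f m ω| ∂P
          ≤ ∫ ω, (|predMean P X f n ω - predMean P X g n ω|
            + |predMean P X g n ω - predMean P X g m ω|
            + |predMean P X g m ω - predMean P X f m ω|) ∂P := by
            exact integral_mono_ae int3 (intsum.add intgm) htri
      _ = ∫ ω, |predMean P X f n ω - predMean P X g n ω| ∂P
            + ∫ ω, |predMean P X g n ω - predMean P X g m ω| ∂P
            + ∫ ω, |predMean P X g m ω - predMean P X f m ω| ∂P := by
            rw [integral_add intsum intgm, integral_add (int1 n n) int2]
      _ ≤ ε / 4 + ε / 2 + ε / 4 := by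
            have h3 : ∫ ω, |predMean P X g m ω - predMean P X f m ω| ∂P
                = ∫ ω, |predMean P X f m ω - predMean P X g m ω| ∂P := by
              exact integral_congr_ae (ae_of_all _ fun ω => abs_sub_comm _ _)
            refine add_le_add (add_le_add (hdiff n) (hN n hn m hm)) ?_
            rw [h3]
            exact hdiff m
      _ = ε := by ring
    obtain ⟨l, htim, -⟩ := cauchy_to_lim (fun n => predMean_integrable hX f n) hcau
    exact ⟨l, htim⟩
end

section
/- Suppose that for each bounded Borel function f : S → ℝ the sequence α_n(f) converges in probability, and let α be a random probability measure with α_n(f) → α(f) in probability for every bounded Borel f. Then X satisfies the weak law of large numbers: μ_n(f) → α(f) in probability for every bounded Borel f; in particular μ_n(f) − α_n(f) → 0 in probability for every bounded Borel f. -/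
open MeasureTheory ProbabilityTheory Filter Topology
open scoped ENNReal NNReal

variable {Ω S : Type*}

lemma my_markov [MeasurableSpace Ω] (P : Measure Ω) [IsProbabilityMeasure P]
    (h : Ω → ℝ) (ε : ℝ) (hε : 0 < ε) (hint : Integrable h P) (hpos : ∀ ω, 0 ≤ h ω) :
    (P {x | ε ≤ h x}).toReal ≤ (∫ ω, h ω ∂P) / ε := by
  have H := mul_meas_ge_le_integral_of_nonneg (μ := P)
    (Filter.Eventually.of_forall hpos) hint ε
  rw [le_div_iff₀ hε]
  rw [measureReal_def, mul_comm] at H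
  exact H

lemma my_helper [MeasurableSpace Ω] (P : Measure Ω) [IsProbabilityMeasure P]
    (g : ℕ → Ω → ℝ) (A : Ω → ℝ)
    (h : ∀ ε : ℝ, 0 < ε → ∃ b : ℕ → ℝ, Tendsto b atTop (𝓝 0) ∧
      ∀ᶠ n in atTop, (P {x | ε ≤ dist (g n x) (A x)}).toReal ≤ b n) :
    TendstoInMeasure P g atTop A := by
  refine tendstoInMeasure_of_ne_top fun ε hε hεtop => ?_
  obtain ⟨b, hb0, hbb⟩ := h ε.toReal (ENNReal.toReal_pos hε.ne' hεtop)
  have hset : ∀ n, {x | ε ≤ edist (g n x) (A x)} = {x | ε.toReal ≤ dist (g n x) (A x)} := by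
    intro n; ext x
    simp only [Set.mem_setOf_eq, edist_dist]
    exact ENNReal.le_ofReal_iff_toReal_le hεtop dist_nonneg
  simp only [hset]
  have h1 : ∀ᶠ n in atTop, P {x | ε.toReal ≤ dist (g n x) (A x)} ≤ ENNReal.ofReal (b n) := by
    filter_upwards [hbb] with n hn
    exact (ENNReal.le_ofReal_iff_toReal_le (measure_ne_top P _)
      (le_trans ENNReal.toReal_nonneg hn)).2 hn
  have h2 : Tendsto (fun n => ENNReal.ofReal (b n)) atTop (𝓝 0) := by
    simpa using ENNReal.tendsto_ofReal hb0
  exact tendsto_of_tendsto_of_tendsto_of_le_of_le' tendsto_const_nhds h2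
    (Filter.Eventually.of_forall fun n => zero_le) h1


/-- Remarks (iii)-(iv): under convergence in probability of all predictive
means, with limit random probability measure `α`, the weak law of large numbers holds:
`μ_n(f) → α(f)` in probability, and in particular `μ_n(f) − α_n(f) → 0` in probability. -/
theorem stmt7 [MeasurableSpace Ω]
    [TopologicalSpace S] [PolishSpace S] [MeasurableSpace S] [BorelSpace S]
    (P : Measure Ω) [IsProbabilityMeasure P]
    (X : ℕ → Ω → S) (hX : ∀ i, Measurable (X i))
    (hconv : (∀ f : S → ℝ, Measurable f → (∃ C, ∀ x, |f x| ≤ C) →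
      ∃ l : Ω → ℝ, TendstoInMeasure P (fun n => predMean P X f n) atTop l))
    (α : Ω → Measure S) (hα : ∀ ω, IsProbabilityMeasure (α ω))
    (hαmeas : ∀ B : Set S, MeasurableSet B → Measurable fun ω => α ω B)
    (hlim : ∀ f : S → ℝ, Measurable f → (∃ C, ∀ x, |f x| ≤ C) →
      TendstoInMeasure P (fun n => predMean P X f n) atTop (fun ω => ∫ x, f x ∂(α ω))) :
    ∀ f : S → ℝ, Measurable f → (∃ C, ∀ x, |f x| ≤ C) →
      TendstoInMeasure P (fun n ω => (∑ i ∈ Finset.range n, f (X i ω)) / n) atTop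
        (fun ω => ∫ x, f x ∂(α ω)) ∧
      TendstoInMeasure P
        (fun n ω => (∑ i ∈ Finset.range n, f (X i ω)) / n - predMean P X f n ω) atTop
        (fun _ => 0) := by
  intro f hf hfC
  obtain ⟨C, hC⟩ := hfC
  have hC' : ∀ x, |f x| ≤ |C| := fun x => (hC x).trans (le_abs_self C)
  -- filtration facts
  have hle : ∀ n, Filt X n ≤ ‹MeasurableSpace Ω› := by
    intro n
    refine iSup₂_le fun i _ => ?_
    exact (hX i).comap_le
  have hmono : Monotone (Filt X) := by
    intro a b hab
    exact biSup_mono fun i hi => Finset.mem_range.2 ((Finset.mem_range.1 hi).trans_le hab)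
  -- basic objects
  set pm : ℕ → Ω → ℝ := fun n => predMean P X f n with hpm_def
  set A : Ω → ℝ := fun ω => ∫ x, f x ∂(α ω) with hA_def
  set d : ℕ → Ω → ℝ := fun i ω => f (X i ω) - pm i ω with hd_def
  set T : ℕ → Ω → ℝ := fun n ω => ∑ i ∈ Finset.range n, d i ω with hT_def
  set B : ℕ → Ω → ℝ := fun n ω => (∑ i ∈ Finset.range n, pm i ω) / n with hB_def
  have hlim' : TendstoInMeasure P pm atTop A := hlim f hf ⟨C, hC⟩
  -- measurability / integrability
  have hfX_meas : ∀ i, Measurable fun ω => f (X i ω) := fun i => hf.comp (hX i)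
  have hfX_int : ∀ i, Integrable (fun ω => f (X i ω)) P := by
    intro i
    exact (memLp_top_of_bound (hfX_meas i).aestronglyMeasurable |C|
      (Filter.Eventually.of_forall fun ω => hC' _)).integrable le_top
  have hpm_meas : ∀ n, Measurable (pm n) :=
    fun n => (stronglyMeasurable_condExp.mono (hle n)).measurable
  have hpm_int : ∀ n, Integrable (pm n) P := fun n => integrable_condExp
  have hpm_bdd : ∀ n, ∀ᵐ ω ∂P, |pm n ω| ≤ |C| := by
    intro n
    have := ae_bdd_condExp_of_ae_bdd (μ := P) (m := Filt X n)
      (R := ⟨|C|, abs_nonneg C⟩) (f := fun ω => f (X n ω))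
      (Filter.Eventually.of_forall fun ω => hC' _)
    exact this
  have hd_meas : ∀ i, Measurable (d i) := fun i => (hfX_meas i).sub (hpm_meas i)
  have hd_int : ∀ i, Integrable (d i) P := fun i => (hfX_int i).sub (hpm_int i)
  have hd_bdd : ∀ i, ∀ᵐ ω ∂P, ‖d i ω‖ ≤ 2 * |C| := by
    intro i
    filter_upwards [hpm_bdd i] with ω h
    have h2 := hC' (X i ω)
    rw [Real.norm_eq_abs]
    calc |f (X i ω) - pm i ω| ≤ |f (X i ω)| + |pm i ω| := abs_sub _ _
    _ ≤ 2 * |C| := by linarith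
  have hd_sm : ∀ i j, i < j → StronglyMeasurable[Filt X j] (d i) := by
    intro i j hij
    have h1 : MeasurableSpace.comap (X i) inferInstance ≤ Filt X j :=
      le_iSup₂ (f := fun i (_ : i ∈ Finset.range j) =>
        MeasurableSpace.comap (X i) inferInstance) i (Finset.mem_range.2 hij)
    have h2 : Measurable[Filt X j] (X i) := measurable_iff_comap_le.mpr h1
    have h3 : StronglyMeasurable[Filt X j] fun ω => f (X i ω) :=
      (hf.comp h2).stronglyMeasurable
    have h4 : StronglyMeasurable[Filt X j] (pm i) :=
      stronglyMeasurable_condExp.mono (hmono hij.le)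
    exact h3.sub h4
  have hprod_int : ∀ i j, Integrable (fun ω => d i ω * d j ω) P := fun i j =>
    Integrable.bdd_mul (hd_int j) (hd_meas i).aestronglyMeasurable (hd_bdd i)
  -- orthogonality
  have key : ∀ i j, i < j → ∫ ω, d i ω * d j ω ∂P = 0 := by
    intro i j hij
    have hm := hle j
    have hzero : P[d j | Filt X j] =ᵐ[P] 0 := by
      have h1 : P[d j | Filt X j] =ᵐ[P]
          P[(fun ω => f (X j ω)) | Filt X j] - P[pm j | Filt X j] :=
        condExp_sub (hfX_int j) (hpm_int j) _
      have h2 : P[pm j | Filt X j] = pm j :=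
        condExp_of_stronglyMeasurable hm stronglyMeasurable_condExp (hpm_int j)
      filter_upwards [h1] with ω hω
      rw [hω, Pi.sub_apply, h2]
      show pm j ω - pm j ω = 0
      ring
    have hprod : P[(fun ω => d i ω * d j ω) | Filt X j] =ᵐ[P]
        fun ω => d i ω * (P[d j | Filt X j]) ω :=
      condExp_stronglyMeasurable_mul_of_bound hm (hd_sm i j hij) (hd_int j)
        (2 * |C|) ((hd_bdd i).mono fun ω h => h)
    calc ∫ ω, d i ω * d j ω ∂P
        = ∫ ω, (P[(fun ω => d i ω * d j ω) | Filt X j]) ω ∂P := (integral_condExp hm).symm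
      _ = ∫ ω, d i ω * (P[d j | Filt X j]) ω ∂P := integral_congr_ae hprod
      _ = 0 := by
          have h0 : (fun ω => d i ω * (P[d j | Filt X j]) ω) =ᵐ[P] fun _ => (0 : ℝ) := by
            filter_upwards [hzero] with ω h
            rw [h]
            simp
          rw [integral_congr_ae h0, integral_zero]
  -- second moment bound
  have hT_meas : ∀ n, Measurable (T n) := fun n =>
    Finset.measurable_sum _ fun i _ => hd_meas i
  have hT_int : ∀ n, Integrable (T n) P := fun n =>
    integrable_finset_sum _ fun i _ => hd_int i
  have hT_bdd : ∀ n, ∀ᵐ ω ∂P, ‖T n ω‖ ≤ n * (2 * |C|) := by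
    intro n
    have := ae_all_iff.2 hd_bdd
    filter_upwards [this] with ω hω
    rw [Real.norm_eq_abs]
    calc |∑ i ∈ Finset.range n, d i ω| ≤ ∑ i ∈ Finset.range n, |d i ω| :=
          Finset.abs_sum_le_sum_abs _ _
      _ ≤ ∑ _i ∈ Finset.range n, (2 * |C|) :=
          Finset.sum_le_sum fun i _ => by simpa [Real.norm_eq_abs] using hω i
      _ = n * (2 * |C|) := by simp [mul_comm]
  have hTsq_int : ∀ n, Integrable (fun ω => (T n ω) ^ 2) P := by
    intro n
    have : Integrable (fun ω => T n ω * T n ω) P :=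
      Integrable.bdd_mul (hT_int n) (hT_meas n).aestronglyMeasurable (hT_bdd n)
    simpa [sq] using this
  have hdsq_int : ∀ n, Integrable (fun ω => (d n ω) ^ 2) P := by
    intro n
    simpa [sq] using hprod_int n n
  have hsq : ∀ n, ∫ ω, (T n ω) ^ 2 ∂P ≤ n * (2 * |C|) ^ 2 := by
    intro n
    induction n with
    | zero => simp [hT_def]
    | succ n ih =>
      have hint2 : Integrable (fun ω => T n ω * d n ω) P :=
        Integrable.bdd_mul (hd_int n) (hT_meas n).aestronglyMeasurable (hT_bdd n)
      have hexp : ∫ ω, (T (n+1) ω) ^ 2 ∂P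
          = ∫ ω, (T n ω) ^ 2 ∂P + (2 * ∫ ω, T n ω * d n ω ∂P + ∫ ω, (d n ω) ^ 2 ∂P) := by
        calc ∫ ω, (T (n+1) ω) ^ 2 ∂P
            = ∫ ω, ((T n ω) ^ 2 + (2 * (T n ω * d n ω) + (d n ω) ^ 2)) ∂P := by
              refine integral_congr_ae (Filter.Eventually.of_forall fun ω => ?_)
              show (T (n+1) ω) ^ 2 = (T n ω) ^ 2 + (2 * (T n ω * d n ω) + (d n ω) ^ 2)
              have h5 : T (n+1) ω = T n ω + d n ω := Finset.sum_range_succ _ n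
              rw [h5]
              ring
          _ = ∫ ω, (T n ω) ^ 2 ∂P + ∫ ω, (2 * (T n ω * d n ω) + (d n ω) ^ 2) ∂P :=
              integral_add (hTsq_int n) ((hint2.const_mul 2).add (hdsq_int n))
          _ = _ := by
              rw [integral_add (hint2.const_mul 2) (hdsq_int n), integral_const_mul]
      have hTdn : ∫ ω, T n ω * d n ω ∂P = 0 := by
        have heq : (fun ω => T n ω * d n ω)
            = fun ω => ∑ i ∈ Finset.range n, d i ω * d n ω := by
          funext ω
          show (∑ i ∈ Finset.range n, d i ω) * d n ω = _
          exact Finset.sum_mul _ _ _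
        rw [heq, integral_finset_sum _ fun i _ => hprod_int i n]
        exact Finset.sum_eq_zero fun i hi => key i n (Finset.mem_range.1 hi)
      have hdsq : ∫ ω, (d n ω) ^ 2 ∂P ≤ (2 * |C|) ^ 2 := by
        have h1 : ∫ ω, (d n ω) ^ 2 ∂P ≤ ∫ _ω, (2 * |C|) ^ 2 ∂P := by
          refine integral_mono_ae (hdsq_int n) (integrable_const _) ?_
          filter_upwards [hd_bdd n] with ω h
          calc (d n ω) ^ 2 = |d n ω| ^ 2 := (sq_abs _).symm
            _ ≤ (2 * |C|) ^ 2 := by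
                have : |d n ω| ≤ 2 * |C| := by simpa [Real.norm_eq_abs] using h
                exact pow_le_pow_left₀ (abs_nonneg _) this 2
        simpa using h1
      rw [hexp, hTdn]
      push_cast
      nlinarith [ih, hdsq]
  -- properties of A
  have hA_aesm : AEStronglyMeasurable A P :=
    (hlim'.aemeasurable fun n => (hpm_meas n).aemeasurable).aestronglyMeasurable
  have hA_bdd : ∀ ω, ‖A ω‖ ≤ |C| := by
    intro ω
    have := hα ω
    calc ‖A ω‖ ≤ |C| * ((α ω) Set.univ).toReal :=
          norm_integral_le_of_norm_le_const
            (Filter.Eventually.of_forall fun x => by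
              simpa [Real.norm_eq_abs] using hC' x)
      _ = |C| := by simp
  have hA_int : Integrable A P :=
    (memLp_top_of_bound hA_aesm |C| (Filter.Eventually.of_forall hA_bdd)).integrable le_top
  -- L¹ convergence of pm to A (Vitali)
  have hui : UnifIntegrable pm 1 P := by
    refine unifIntegrable_of le_rfl ENNReal.one_ne_top
      (fun n => (hpm_meas n).aestronglyMeasurable) ?_
    intro ε hε
    refine ⟨⟨|C|, abs_nonneg C⟩ + 1, fun n => ?_⟩
    have h0 : ({x | (⟨|C|, abs_nonneg C⟩ + 1 : ℝ≥0) ≤ ‖pm n x‖₊}.indicator (pm n)) =ᵐ[P] 0 := by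
      filter_upwards [hpm_bdd n] with ω h
      rw [Set.indicator_of_notMem]
      · rfl
      · intro hmem
        have h1 : ((⟨|C|, abs_nonneg C⟩ + 1 : ℝ≥0) : ℝ) ≤ (‖pm n ω‖₊ : ℝ) := by
          exact_mod_cast hmem
        rw [coe_nnnorm, Real.norm_eq_abs] at h1
        have h2 : ((⟨|C|, abs_nonneg C⟩ + 1 : ℝ≥0) : ℝ) = |C| + 1 := rfl
        rw [h2] at h1
        linarith
    rw [eLpNorm_congr_ae h0, eLpNorm_zero]
    exact zero_le
  have hL1 : Tendsto (fun n => eLpNorm (pm n - A) 1 P) atTop (𝓝 0) :=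
    tendsto_Lp_finite_of_tendstoInMeasure le_rfl ENNReal.one_ne_top
      (fun n => (hpm_meas n).aestronglyMeasurable)
      (memLp_one_iff_integrable.2 hA_int) hui hlim'
  set e : ℕ → ℝ := fun n => ∫ ω, |pm n ω - A ω| ∂P with he_def
  have hpmA_int : ∀ n, Integrable (fun ω => pm n ω - A ω) P :=
    fun n => (hpm_int n).sub hA_int
  have he_eq : ∀ n, ENNReal.ofReal (e n) = eLpNorm (pm n - A) 1 P := by
    intro n
    rw [eLpNorm_one_eq_lintegral_enorm]
    have := ofReal_integral_norm_eq_lintegral_enorm (hpmA_int n)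
    simpa [Real.norm_eq_abs] using this
  have he0 : Tendsto e atTop (𝓝 0) := by
    have h2 : Tendsto (fun n => (eLpNorm (pm n - A) 1 P).toReal) atTop (𝓝 0) := by
      have := (ENNReal.tendsto_toReal (a := 0) (by simp)).comp hL1
      exact this
    refine h2.congr fun n => ?_
    rw [← he_eq n, ENNReal.toReal_ofReal (integral_nonneg fun ω => abs_nonneg _)]
  have hce : Tendsto (fun n : ℕ => (n : ℝ)⁻¹ * ∑ i ∈ Finset.range n, e i) atTop (𝓝 0) :=
    he0.cesaro
  have hB_int : ∀ n, Integrable (B n) P := fun n =>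
    (integrable_finset_sum _ fun i _ => hpm_int i).div_const _
  have hBA_int : ∀ n, Integrable (fun ω => |B n ω - A ω|) P := fun n =>
    ((hB_int n).sub hA_int).abs
  have hBA_bound : ∀ n : ℕ, 1 ≤ n →
      ∫ ω, |B n ω - A ω| ∂P ≤ (n : ℝ)⁻¹ * ∑ i ∈ Finset.range n, e i := by
    intro n hn
    have hne : (n : ℝ) ≠ 0 := Nat.cast_ne_zero.2 (by omega)
    have hpt : ∀ ω, |B n ω - A ω| ≤ (n : ℝ)⁻¹ * ∑ i ∈ Finset.range n, |pm i ω - A ω| := by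
      intro ω
      have hBA : B n ω - A ω = (∑ i ∈ Finset.range n, (pm i ω - A ω)) / n := by
        rw [Finset.sum_sub_distrib, sub_div]
        congr 1
        rw [Finset.sum_const, Finset.card_range, nsmul_eq_mul, mul_div_cancel_left₀ _ hne]
      rw [hBA, abs_div, Nat.abs_cast, div_eq_inv_mul]
      refine mul_le_mul_of_nonneg_left ?_ (by positivity)
      exact Finset.abs_sum_le_sum_abs _ _
    calc ∫ ω, |B n ω - A ω| ∂P
        ≤ ∫ ω, (n : ℝ)⁻¹ * ∑ i ∈ Finset.range n, |pm i ω - A ω| ∂P :=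
          integral_mono (hBA_int n)
            ((integrable_finset_sum _ fun i _ => (hpmA_int i).abs).const_mul _) hpt
      _ = (n : ℝ)⁻¹ * ∑ i ∈ Finset.range n, e i := by
          rw [integral_const_mul, integral_finset_sum _ fun i _ => (hpmA_int i).abs]
  -- decomposition of the empirical mean
  have hgdecomp : ∀ (n : ℕ) (ω : Ω),
      (∑ i ∈ Finset.range n, f (X i ω)) / n = T n ω / n + B n ω := by
    intro n ω
    have h1 : (∑ i ∈ Finset.range n, f (X i ω))
        = T n ω + ∑ i ∈ Finset.range n, pm i ω := by
      simp [hT_def, hd_def, Finset.sum_sub_distrib]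
    rw [h1, add_div]
  -- Chebyshev for the martingale part
  have hTmarkov : ∀ (εp : ℝ), 0 < εp → ∀ n : ℕ,
      (P {x | εp ≤ |T n x / n|}).toReal ≤ ((2 * |C|) ^ 2 / εp ^ 2) / n := by
    intro εp hεp n
    have hTn2eq : (fun ω => (T n ω / n) ^ 2) = fun ω => (T n ω) ^ 2 / ((n : ℝ) ^ 2) := by
      funext ω; rw [div_pow]
    have hTn2int : Integrable (fun ω => (T n ω / n) ^ 2) P := by
      rw [hTn2eq]; exact (hTsq_int n).div_const _
    have hset : {x | εp ≤ |T n x / n|} = {x | εp ^ 2 ≤ (T n x / n) ^ 2} := by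
      ext x
      simp only [Set.mem_setOf_eq]
      rw [← sq_abs (T n x / n)]
      constructor
      · intro h; exact pow_le_pow_left₀ hεp.le h 2
      · intro h; nlinarith [abs_nonneg (T n x / n)]
    have h1 := my_markov P _ (εp ^ 2) (by positivity) hTn2int fun ω => sq_nonneg _
    rw [hset]
    refine h1.trans ?_
    have h2 : ∫ ω, (T n ω / n) ^ 2 ∂P ≤ (2 * |C|) ^ 2 / n := by
      by_cases hn : n = 0
      · subst hn
        simp
      · have hne : (n : ℝ) ≠ 0 := Nat.cast_ne_zero.2 hn
        have h3 : ∫ ω, (T n ω / n) ^ 2 ∂P = (∫ ω, (T n ω) ^ 2 ∂P) / ((n : ℝ) ^ 2) := by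
          rw [hTn2eq, integral_div]
        rw [h3, div_le_div_iff₀ (by positivity) (by positivity)]
        have h4 := hsq n
        nlinarith [Nat.cast_nonneg (α := ℝ) n]
    calc (∫ ω, (T n ω / n) ^ 2 ∂P) / εp ^ 2 ≤ ((2 * |C|) ^ 2 / n) / εp ^ 2 := by gcongr
      _ = ((2 * |C|) ^ 2 / εp ^ 2) / n := by ring
  -- Chebyshev for the predictive-mean part
  have hpmmarkov : ∀ (εp : ℝ), 0 < εp → ∀ n : ℕ,
      (P {x | εp ≤ |pm n x - A x|}).toReal ≤ e n / εp := by
    intro εp hεp n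
    exact my_markov P (fun x => |pm n x - A x|) εp hεp (hpmA_int n).abs fun ω => abs_nonneg _
  have hBmarkov : ∀ (εp : ℝ), 0 < εp → ∀ n : ℕ, 1 ≤ n →
      (P {x | εp ≤ |B n x - A x|}).toReal
        ≤ ((n : ℝ)⁻¹ * ∑ i ∈ Finset.range n, e i) / εp := by
    intro εp hεp n hn
    refine (my_markov P (fun x => |B n x - A x|) εp hεp (hBA_int n) fun ω => abs_nonneg _).trans ?_
    gcongr
    exact hBA_bound n hn
  constructor
  · -- first statement
    refine my_helper P _ _ ?_
    intro ε hε
    have hε2 : 0 < ε / 2 := by linarith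
    refine ⟨fun n => ((2 * |C|) ^ 2 / (ε / 2) ^ 2) / n
      + ((n : ℝ)⁻¹ * ∑ i ∈ Finset.range n, e i) / (ε / 2), ?_, ?_⟩
    · have t1 := tendsto_const_div_atTop_nhds_zero_nat ((2 * |C|) ^ 2 / (ε / 2) ^ 2)
      have t2 := hce.div_const (ε / 2)
      simpa using t1.add t2
    · filter_upwards [eventually_ge_atTop 1] with n hn
      have hsub : {x | ε ≤ dist ((∑ i ∈ Finset.range n, f (X i x)) / n) (A x)}
          ⊆ {x | ε / 2 ≤ |T n x / n|} ∪ {x | ε / 2 ≤ |B n x - A x|} := by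
        intro x hx
        simp only [Set.mem_setOf_eq, Set.mem_union] at hx ⊢
        by_contra hcon
        push_neg at hcon
        obtain ⟨h1, h2⟩ := hcon
        rw [Real.dist_eq, hgdecomp n x] at hx
        have h3 : |T n x / n + B n x - A x| ≤ |T n x / n| + |B n x - A x| := by
          have : T n x / n + B n x - A x = T n x / n + (B n x - A x) := by ring
          rw [this]
          exact abs_add_le _ _
        linarith
      calc (P {x | ε ≤ dist ((∑ i ∈ Finset.range n, f (X i x)) / n) (A x)}).toReal
          ≤ (P ({x | ε / 2 ≤ |T n x / n|} ∪ {x | ε / 2 ≤ |B n x - A x|})).toReal :=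
            ENNReal.toReal_mono (measure_ne_top P _) (measure_mono hsub)
        _ ≤ (P {x | ε / 2 ≤ |T n x / n|}).toReal + (P {x | ε / 2 ≤ |B n x - A x|}).toReal := by
            refine le_trans (ENNReal.toReal_mono ?_ (measure_union_le _ _))
              ENNReal.toReal_add_le
            exact ENNReal.add_ne_top.2 ⟨measure_ne_top P _, measure_ne_top P _⟩
        _ ≤ _ := add_le_add (hTmarkov (ε / 2) hε2 n) (hBmarkov (ε / 2) hε2 n hn)
  · -- second statement
    refine my_helper P _ _ ?_
    intro ε hε
    have hε3 : 0 < ε / 3 := by linarith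
    refine ⟨fun n => (((2 * |C|) ^ 2 / (ε / 3) ^ 2) / n
      + ((n : ℝ)⁻¹ * ∑ i ∈ Finset.range n, e i) / (ε / 3)) + e n / (ε / 3), ?_, ?_⟩
    · have t1 := tendsto_const_div_atTop_nhds_zero_nat ((2 * |C|) ^ 2 / (ε / 3) ^ 2)
      have t2 := hce.div_const (ε / 3)
      have t3 := he0.div_const (ε / 3)
      simpa using (t1.add t2).add t3
    · filter_upwards [eventually_ge_atTop 1] with n hn
      have hsub : {x | ε ≤ dist ((∑ i ∈ Finset.range n, f (X i x)) / n - pm n x) 0}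
          ⊆ ({x | ε / 3 ≤ |T n x / n|} ∪ {x | ε / 3 ≤ |B n x - A x|})
            ∪ {x | ε / 3 ≤ |pm n x - A x|} := by
        intro x hx
        simp only [Set.mem_setOf_eq, Set.mem_union] at hx ⊢
        by_contra hcon
        push_neg at hcon
        obtain ⟨⟨h1, h2⟩, h3⟩ := hcon
        rw [Real.dist_eq, sub_zero, hgdecomp n x] at hx
        have h4 : |T n x / n + B n x - pm n x|
            ≤ |T n x / n| + |B n x - A x| + |pm n x - A x| := by
          have h5 : T n x / n + B n x - pm n x
              = (T n x / n + (B n x - A x)) + (A x - pm n x) := by ring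
          rw [h5]
          refine (abs_add_le _ _).trans ?_
          have h6 := abs_add_le (T n x / n) (B n x - A x)
          have h7 : |A x - pm n x| = |pm n x - A x| := abs_sub_comm _ _
          linarith
        linarith
      calc (P {x | ε ≤ dist ((∑ i ∈ Finset.range n, f (X i x)) / n - pm n x) 0}).toReal
          ≤ (P (({x | ε / 3 ≤ |T n x / n|} ∪ {x | ε / 3 ≤ |B n x - A x|})
              ∪ {x | ε / 3 ≤ |pm n x - A x|})).toReal :=
            ENNReal.toReal_mono (measure_ne_top P _) (measure_mono hsub)
        _ ≤ ((P {x | ε / 3 ≤ |T n x / n|}).toReal + (P {x | ε / 3 ≤ |B n x - A x|}).toReal)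
              + (P {x | ε / 3 ≤ |pm n x - A x|}).toReal := by
            refine le_trans (ENNReal.toReal_mono ?_ ((measure_union_le _ _).trans
              (add_le_add (measure_union_le _ _) le_rfl))) ?_
            · exact ENNReal.add_ne_top.2 ⟨ENNReal.add_ne_top.2
                ⟨measure_ne_top P _, measure_ne_top P _⟩, measure_ne_top P _⟩
            · exact ENNReal.toReal_add_le.trans
                (add_le_add ENNReal.toReal_add_le le_rfl)
        _ ≤ _ := add_le_add (add_le_add (hTmarkov (ε / 3) hε3 n) (hBmarkov (ε / 3) hε3 n hn))
              (hpmmarkov (ε / 3) hε3 n)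
end

section
/- X is conditionally identically distributed (c.i.d.) if and only if, for each bounded Borel function f : S → ℝ, the sequence (α_n(f) : n ≥ 0) is a martingale with respect to the filtration (𝓕_n). -/
open MeasureTheory ProbabilityTheory Filter Topology
open scoped ENNReal NNReal

variable {Ω S : Type*}

/-- The natural filtration of `X`, as a `Filtration`. -/
def natFilt [MeasurableSpace Ω] [MeasurableSpace S] (X : ℕ → Ω → S)
    (hX : ∀ i, Measurable (X i)) : Filtration ℕ (‹MeasurableSpace Ω›) where
  seq := Filt X
  mono' := fun _ _ hmn => biSup_mono fun _ hi => Finset.mem_range.mpr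
    (lt_of_lt_of_le (Finset.mem_range.mp hi) hmn)
  le' := fun _ => iSup₂_le fun i _ => (hX i).comap_le

/-- `X` is conditionally identically distributed (c.i.d.):
`(X_1,…,X_n,X_k) ∼ (X_1,…,X_n,X_{n+1})` for all `k > n ≥ 0` (with the present indexing,
`(X_0,…,X_{n-1},X_k) ∼ (X_0,…,X_{n-1},X_n)` for all `k ≥ n ≥ 0`). -/
def CID [MeasurableSpace Ω] [MeasurableSpace S] (P : Measure Ω) (X : ℕ → Ω → S) : Prop :=
  ∀ n k : ℕ, n ≤ k →
    P.map (fun ω => ((fun i : Fin n => X i.val ω), X k ω)) =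
      P.map (fun ω => ((fun i : Fin n => X i.val ω), X n ω))

section Aux

variable [MeasurableSpace Ω] [MeasurableSpace S]

/-- `Filt X n` is the σ-algebra pulled back by the tuple map. -/
lemma filt_eq_comap (X : ℕ → Ω → S) (n : ℕ) :
    Filt X n = MeasurableSpace.comap (fun ω => fun i : Fin n => X i.val ω)
      MeasurableSpace.pi := by
  rw [MeasurableSpace.pi, MeasurableSpace.comap_iSup]
  simp_rw [MeasurableSpace.comap_comp]
  apply le_antisymm
  · refine iSup₂_le fun i hi => ?_
    have hi' : i < n := Finset.mem_range.mp hi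
    exact le_iSup (fun j : Fin n =>
      MeasurableSpace.comap ((fun g : Fin n → S => g j) ∘ fun ω i => X i.val ω)
        inferInstance) ⟨i, hi'⟩
  · refine iSup_le fun i => ?_
    exact le_biSup (fun j : ℕ => MeasurableSpace.comap (X j) inferInstance)
      (Finset.mem_range.mpr i.2)

variable (P : Measure Ω) [IsProbabilityMeasure P] (X : ℕ → Ω → S)

lemma integrable_comp_bdd (hX : ∀ i, Measurable (X i)) {f : S → ℝ} (hf : Measurable f) {C : ℝ} (hC : ∀ x, |f x| ≤ C) (j : ℕ) :
    Integrable (fun ω => f (X j ω)) P :=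
  Integrable.mono' (integrable_const C) ((hf.comp (hX j)).aestronglyMeasurable)
    (Filter.Eventually.of_forall fun ω => by simpa [Real.norm_eq_abs] using hC (X j ω))

/-- Transport a set-integral through the equality of joint laws. -/
lemma setIntegral_eq_of_law (hX : ∀ i, Measurable (X i)) {f : S → ℝ} (hf : Measurable f) {n k : ℕ}
    (hlaw : P.map (fun ω => ((fun i : Fin n => X i.val ω), X k ω)) =
      P.map (fun ω => ((fun i : Fin n => X i.val ω), X n ω)))
    {B : Set (Fin n → S)} (hB : MeasurableSet B) :
    ∫ ω in (fun ω => fun i : Fin n => X i.val ω) ⁻¹' B, f (X k ω) ∂P =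
      ∫ ω in (fun ω => fun i : Fin n => X i.val ω) ⁻¹' B, f (X n ω) ∂P := by
  have hV : Measurable (fun ω => fun i : Fin n => X i.val ω) :=
    measurable_pi_lambda _ fun i => hX i
  have hpk : Measurable (fun ω => ((fun i : Fin n => X i.val ω), X k ω)) := hV.prodMk (hX k)
  have hpn : Measurable (fun ω => ((fun i : Fin n => X i.val ω), X n ω)) := hV.prodMk (hX n)
  have hpre : ∀ j : ℕ,
      (fun ω => ((fun i : Fin n => X i.val ω), X j ω)) ⁻¹' (B ×ˢ Set.univ) =
        (fun ω => fun i : Fin n => X i.val ω) ⁻¹' B := by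
    intro j; ext ω; simp
  have hgk : AEStronglyMeasurable (fun p : (Fin n → S) × S => f p.2)
      (P.map (fun ω => ((fun i : Fin n => X i.val ω), X k ω))) :=
    (hf.comp measurable_snd).aestronglyMeasurable
  have hgn : AEStronglyMeasurable (fun p : (Fin n → S) × S => f p.2)
      (P.map (fun ω => ((fun i : Fin n => X i.val ω), X n ω))) :=
    (hf.comp measurable_snd).aestronglyMeasurable
  have h1 := setIntegral_map (hB.prod MeasurableSet.univ) hgk hpk.aemeasurable
  have h2 := setIntegral_map (hB.prod MeasurableSet.univ) hgn hpn.aemeasurable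
  rw [hpre k] at h1
  rw [hpre n] at h2
  rw [← h1, ← h2, hlaw]

/-- Equality of joint laws yields equality of conditional expectations. -/
lemma condexp_eq_of_law (hX : ∀ i, Measurable (X i)) {f : S → ℝ} (hf : Measurable f) {C : ℝ} (hC : ∀ x, |f x| ≤ C) {n k : ℕ}
    (hlaw : P.map (fun ω => ((fun i : Fin n => X i.val ω), X k ω)) =
      P.map (fun ω => ((fun i : Fin n => X i.val ω), X n ω))) :
    P[(fun ω => f (X k ω)) | Filt X n] =ᵐ[P] P[(fun ω => f (X n ω)) | Filt X n] := by
  have hm : Filt X n ≤ ‹MeasurableSpace Ω› := (natFilt X hX).le n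
  haveI : SigmaFinite (P.trim hm) := by
    haveI : IsFiniteMeasure (P.trim hm) := isFiniteMeasure_trim hm
    infer_instance
  have hintk := integrable_comp_bdd P X hX hf hC k
  have hintn := integrable_comp_bdd P X hX hf hC n
  refine (ae_eq_condExp_of_forall_setIntegral_eq hm hintk
    (fun s _ _ => integrable_condExp.integrableOn) (fun s hs _ => ?_)
    (stronglyMeasurable_condExp.aestronglyMeasurable)).symm
  rw [setIntegral_condExp hm hintn hs]
  rw [filt_eq_comap] at hs
  obtain ⟨B, hB, rfl⟩ := hs
  exact (setIntegral_eq_of_law P X hX hf hlaw hB).symm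

end Aux

/-- `X` is c.i.d. iff, for each bounded Borel `f`, the sequence
`(α_n(f))_{n≥0}` is a martingale with respect to the filtration `(𝓕_n)`. -/
theorem stmt9 [MeasurableSpace Ω]
    [TopologicalSpace S] [PolishSpace S] [MeasurableSpace S] [BorelSpace S]
    (P : Measure Ω) [IsProbabilityMeasure P]
    (X : ℕ → Ω → S) (hX : ∀ i, Measurable (X i)) :
    CID P X ↔
      (∀ f : S → ℝ, Measurable f → (∃ C, ∀ x, |f x| ≤ C) →
        Martingale (fun n => predMean P X f n) (natFilt X hX) P) := by
  constructor
  · intro hcid f hf ⟨C, hC⟩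
    refine ⟨fun n => stronglyMeasurable_condExp, fun i j hij => ?_⟩
    have h1 : P[predMean P X f j | (natFilt X hX) i] =ᵐ[P]
        P[(fun ω => f (X j ω)) | Filt X i] :=
      by have := isFiniteMeasure_trim (μ := P) ((natFilt X hX).le j); have hs : SigmaFinite (P.trim ((natFilt X hX).le j)) := inferInstance; exact @condExp_condExp_of_le _ _ (fun ω => f (X j ω)) _ _ _ _ _ _ P ((natFilt X hX).mono hij) ((natFilt X hX).le j) hs
    exact h1.trans (condexp_eq_of_law P X hX hf hC (hcid i j hij))
  · intro hmart n k hnk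
    -- one-step equality of conditional expectations, for each bounded Borel f
    have h1 : ∀ (f : S → ℝ), Measurable f → ∀ (C : ℝ), (∀ x, |f x| ≤ C) → ∀ m : ℕ,
        P[(fun ω => f (X (m + 1) ω)) | Filt X m] =ᵐ[P]
          P[(fun ω => f (X m ω)) | Filt X m] := by
      intro f hf C hC m
      have h := (hmart f hf ⟨C, hC⟩).2 m (m + 1) (Nat.le_succ m)
      have h2 : P[predMean P X f (m + 1) | (natFilt X hX) m] =ᵐ[P]
          P[(fun ω => f (X (m + 1) ω)) | Filt X m] :=
        by have := isFiniteMeasure_trim (μ := P) ((natFilt X hX).le (m + 1)); have hs : SigmaFinite (P.trim ((natFilt X hX).le (m + 1))) := inferInstance; exact @condExp_condExp_of_le _ _ (fun ω => f (X (m + 1) ω)) _ _ _ _ _ _ P ((natFilt X hX).mono (Nat.le_succ m)) ((natFilt X hX).le (m + 1)) hs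
      exact h2.symm.trans h
    -- multi-step equality by induction
    have hkey : ∀ (f : S → ℝ), Measurable f → ∀ (C : ℝ), (∀ x, |f x| ≤ C) →
        P[(fun ω => f (X k ω)) | Filt X n] =ᵐ[P]
          P[(fun ω => f (X n ω)) | Filt X n] := by
      intro f hf C hC
      induction k, hnk using Nat.le_induction with
      | base => exact EventuallyEq.rfl
      | succ k hk ih =>
        have hnk' : Filt X n ≤ Filt X k := (natFilt X hX).mono hk
        have e1 : P[(fun ω => f (X (k + 1) ω)) | Filt X n] =ᵐ[P]
            P[ P[(fun ω => f (X (k + 1) ω)) | Filt X k] | Filt X n] :=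
          by have := isFiniteMeasure_trim (μ := P) ((natFilt X hX).le k); have hs : SigmaFinite (P.trim ((natFilt X hX).le k)) := inferInstance; exact (@condExp_condExp_of_le _ _ (fun ω => f (X (k + 1) ω)) _ _ _ _ _ _ P hnk' ((natFilt X hX).le k) hs).symm
        have e2 : P[ P[(fun ω => f (X (k + 1) ω)) | Filt X k] | Filt X n] =ᵐ[P]
            P[ P[(fun ω => f (X k ω)) | Filt X k] | Filt X n] :=
          condExp_congr_ae (h1 f hf C hC k)
        have e3 : P[ P[(fun ω => f (X k ω)) | Filt X k] | Filt X n] =ᵐ[P]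
            P[(fun ω => f (X k ω)) | Filt X n] :=
          by have := isFiniteMeasure_trim (μ := P) ((natFilt X hX).le k); have hs : SigmaFinite (P.trim ((natFilt X hX).le k)) := inferInstance; exact @condExp_condExp_of_le _ _ (fun ω => f (X k ω)) _ _ _ _ _ _ P hnk' ((natFilt X hX).le k) hs
        exact ((e1.trans e2).trans e3).trans ih
    -- π-system argument on rectangles
    have hV : Measurable (fun ω => fun i : Fin n => X i.val ω) :=
      measurable_pi_lambda _ fun i => hX i
    have hpk : Measurable (fun ω => ((fun i : Fin n => X i.val ω), X k ω)) :=
      hV.prodMk (hX k)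
    have hpn : Measurable (fun ω => ((fun i : Fin n => X i.val ω), X n ω)) :=
      hV.prodMk (hX n)
    haveI : IsProbabilityMeasure
        (P.map (fun ω => ((fun i : Fin n => X i.val ω), X k ω))) :=
      Measure.isProbabilityMeasure_map hpk.aemeasurable
    haveI : IsProbabilityMeasure
        (P.map (fun ω => ((fun i : Fin n => X i.val ω), X n ω))) :=
      Measure.isProbabilityMeasure_map hpn.aemeasurable
    refine ext_of_generate_finite _ generateFrom_prod.symm isPiSystem_prod ?_ (by simp)
    rintro _ ⟨B, hB, Cset, hCset, rfl⟩
    simp only [Set.mem_setOf_eq] at hB hCset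
    set f : S → ℝ := Set.indicator Cset (fun _ => (1:ℝ)) with hfdef
    have hfmeas : Measurable f := measurable_const.indicator hCset
    have hfbd : ∀ x, |f x| ≤ 1 := by
      intro x
      by_cases hx : x ∈ Cset <;> simp [hfdef, Set.indicator_apply, hx]
    set A : Set Ω := (fun ω => fun i : Fin n => X i.val ω) ⁻¹' B with hAdef
    have hAm : MeasurableSet[Filt X n] A := by
      rw [filt_eq_comap]; exact ⟨B, hB, rfl⟩
    have hm : Filt X n ≤ ‹MeasurableSpace Ω› := (natFilt X hX).le n
    have hA : MeasurableSet A := hm A hAm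
    -- the set-integral identity
    have hint : ∀ j : ℕ, ∫ ω in A, f (X j ω) ∂P = (P (A ∩ X j ⁻¹' Cset)).toReal := by
      intro j
      have : (fun ω => f (X j ω)) = Set.indicator (X j ⁻¹' Cset) (fun _ => (1:ℝ)) := by
        ext ω
        by_cases hx : X j ω ∈ Cset <;> simp [hfdef, Set.indicator_apply, hx]
      rw [this, setIntegral_indicator ((hX j) hCset), setIntegral_const, smul_eq_mul, mul_one]; rfl
    have hstep : ∫ ω in A, f (X k ω) ∂P = ∫ ω in A, f (X n ω) ∂P := by
      have hik := integrable_comp_bdd P X hX hfmeas hfbd k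
      have hin := integrable_comp_bdd P X hX hfmeas hfbd n
      calc ∫ ω in A, f (X k ω) ∂P
          = ∫ ω in A, (P[(fun ω => f (X k ω)) | Filt X n]) ω ∂P :=
            (setIntegral_condExp hm hik hAm).symm
        _ = ∫ ω in A, (P[(fun ω => f (X n ω)) | Filt X n]) ω ∂P :=
            integral_congr_ae (ae_restrict_of_ae (hkey f hfmeas 1 hfbd))
        _ = ∫ ω in A, f (X n ω) ∂P := setIntegral_condExp hm hin hAm
    have hmeasEq : P (A ∩ X k ⁻¹' Cset) = P (A ∩ X n ⁻¹' Cset) := by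
      have := hstep
      rw [hint k, hint n] at this
      exact (ENNReal.toReal_eq_toReal_iff' (measure_ne_top _ _) (measure_ne_top _ _)).mp this
    have hpreim : ∀ j : ℕ,
        (fun ω => ((fun i : Fin n => X i.val ω), X j ω)) ⁻¹' (B ×ˢ Cset) =
          A ∩ X j ⁻¹' Cset := by
      intro j; ext ω; simp [hAdef]
    rw [Measure.map_apply hpk (hB.prod hCset), Measure.map_apply hpn (hB.prod hCset),
      hpreim k, hpreim n, hmeasEq]
end

section
/- If X is conditionally identically distributed (c.i.d.), then for each bounded Borel function f : S → ℝ the sequence α_n(f) converges almost surely as n → ∞. -/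
open MeasureTheory ProbabilityTheory Filter Topology
open scoped ENNReal NNReal

variable {Ω S : Type*}

lemma Filt_eq_comap [MeasurableSpace S] (X : ℕ → Ω → S) (n : ℕ) :
    Filt X n
      = MeasurableSpace.comap (fun ω => (fun i : Fin n => X i.val ω)) MeasurableSpace.pi := by
  rw [Filt, MeasurableSpace.pi, MeasurableSpace.comap_iSup]
  simp_rw [MeasurableSpace.comap_comp, Function.comp_def]
  apply le_antisymm
  · refine iSup₂_le fun i hi => ?_
    exact le_iSup_of_le ⟨i, Finset.mem_range.mp hi⟩ le_rfl
  · refine iSup_le fun i => ?_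
    exact le_iSup₂_of_le i.val (Finset.mem_range.mpr i.isLt) le_rfl

lemma Filt_le [MeasurableSpace Ω] [MeasurableSpace S] (X : ℕ → Ω → S)
    (hX : ∀ i, Measurable (X i)) (n : ℕ) : Filt X n ≤ ‹MeasurableSpace Ω› :=
  iSup₂_le fun i _ => (hX i).comap_le

lemma Filt_mono [MeasurableSpace S] (X : ℕ → Ω → S) {n m : ℕ} (h : n ≤ m) :
    Filt X n ≤ Filt X m :=
  iSup₂_le fun i hi =>
    le_iSup₂_of_le i (Finset.mem_range.mpr (lt_of_lt_of_le (Finset.mem_range.mp hi) h)) le_rfl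

/-- Key consequence of the c.i.d. property: `E[f(X_k) | 𝓕_n] = E[f(X_n) | 𝓕_n]` for `n ≤ k`. -/
lemma condexp_cid [MeasurableSpace Ω]
    [TopologicalSpace S] [PolishSpace S] [MeasurableSpace S] [BorelSpace S]
    (P : Measure Ω) [IsProbabilityMeasure P]
    (X : ℕ → Ω → S) (hX : ∀ i, Measurable (X i)) (hcid : CID P X)
    (f : S → ℝ) (hf : Measurable f) {C : ℝ} (hC : ∀ x, |f x| ≤ C)
    {n k : ℕ} (hnk : n ≤ k) :
    P[(fun ω => f (X k ω)) | Filt X n] =ᵐ[P] P[(fun ω => f (X n ω)) | Filt X n] := by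
  have hm : Filt X n ≤ ‹MeasurableSpace Ω› := Filt_le X hX n
  have hint : ∀ j, Integrable (fun ω => f (X j ω)) P := fun j =>
    Integrable.mono' (integrable_const C) ((hf.comp (hX j)).aestronglyMeasurable)
      (Filter.Eventually.of_forall fun ω => by simpa using hC (X j ω))
  haveI : SigmaFinite (P.trim hm) := inferInstance
  refine ae_eq_condExp_of_forall_setIntegral_eq hm (hint n)
    (fun s _ _ => integrable_condExp.integrableOn) (fun s hs hμs => ?_)
    (StronglyMeasurable.aestronglyMeasurable stronglyMeasurable_condExp)
  rw [setIntegral_condExp hm (hint k) hs]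
  -- now show ∫ ω in s, f (X k ω) ∂P = ∫ ω in s, f (X n ω) ∂P
  rw [Filt_eq_comap] at hs
  obtain ⟨B, hB, rfl⟩ := hs
  set V : Ω → (Fin n → S) := fun ω => (fun i : Fin n => X i.val ω) with hV
  have hVmeas : Measurable V := measurable_pi_lambda _ fun i => hX i.val
  set h : (Fin n → S) × S → ℝ := (B ×ˢ (Set.univ : Set S)).indicator (fun p => f p.2) with hh
  have hhsm : AEStronglyMeasurable h (P.map (fun ω => (V ω, X k ω))) := by
    exact ((hf.comp measurable_snd).indicator
      (hB.prod MeasurableSet.univ)).aestronglyMeasurable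
  have key : ∀ j : ℕ, ∫ ω in V ⁻¹' B, f (X j ω) ∂P = ∫ p, h p ∂(P.map fun ω => (V ω, X j ω)) := by
    intro j
    have hΦ : Measurable fun ω => (V ω, X j ω) := hVmeas.prodMk (hX j)
    have hsm' : AEStronglyMeasurable h (P.map fun ω => (V ω, X j ω)) :=
      (Measurable.indicator
        (show Measurable fun p : (Fin n → S) × S => f p.2 from hf.comp measurable_snd)
        (hB.prod MeasurableSet.univ)).aestronglyMeasurable
    rw [integral_map hΦ.aemeasurable hsm', ← integral_indicator (hVmeas hB)]
    congr 1
    funext ω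
    by_cases hω : V ω ∈ B <;>
      simp [hh, Set.indicator, hω]
  rw [key k, key n, hcid n k hnk]

/-- if `X` is c.i.d., then `α_n(f)` converges almost surely for each
bounded Borel `f`. -/
theorem stmt10 [MeasurableSpace Ω]
    [TopologicalSpace S] [PolishSpace S] [MeasurableSpace S] [BorelSpace S]
    (P : Measure Ω) [IsProbabilityMeasure P]
    (X : ℕ → Ω → S) (hX : ∀ i, Measurable (X i))
    (hcid : CID P X) :
    ∀ f : S → ℝ, Measurable f → (∃ C, ∀ x, |f x| ≤ C) →
      ∀ᵐ ω ∂P, ∃ L : ℝ, Tendsto (fun n => predMean P X f n ω) atTop (𝓝 L) := by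
  rintro f hf ⟨C, hC⟩
  set C' : ℝ := max C 0 with hC'
  have hC'' : ∀ x, |f x| ≤ C' := fun x => (hC x).trans (le_max_left _ _)
  have hint : ∀ j, Integrable (fun ω => f (X j ω)) P := fun j =>
    Integrable.mono' (integrable_const C') ((hf.comp (hX j)).aestronglyMeasurable)
      (Filter.Eventually.of_forall fun ω => by simpa using hC'' (X j ω))
  set ℱ : Filtration ℕ ‹MeasurableSpace Ω› :=
    ⟨fun n => Filt X n, fun _ _ h => Filt_mono X h, fun n => Filt_le X hX n⟩ with hℱ
  have hmart : Martingale (predMean P X f) ℱ P := by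
    constructor
    · intro n
      exact stronglyMeasurable_condExp
    · intro i j hij
      calc P[predMean P X f j | ℱ i]
          =ᵐ[P] P[(fun ω => f (X j ω)) | Filt X i] :=
            condExp_condExp_of_le (Filt_mono X hij) (Filt_le X hX j)
        _ =ᵐ[P] P[(fun ω => f (X i ω)) | Filt X i] :=
            condexp_cid P X hX hcid f hf hC'' hij
        _ = predMean P X f i := rfl
  have hbdd : ∀ n, ∀ᵐ ω ∂P, |predMean P X f n ω| ≤ (C'.toNNReal : ℝ) := by
    intro n
    refine ae_bdd_condExp_of_ae_bdd (Filter.Eventually.of_forall fun ω => ?_)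
    rw [Real.coe_toNNReal _ (le_max_right _ _)]
    exact hC'' (X n ω)
  have hsnorm : ∀ n, eLpNorm (predMean P X f n) 1 P ≤ (C'.toNNReal : ℝ≥0∞) := by
    intro n
    have := eLpNorm_le_of_ae_bound (μ := P) (p := 1) (f := predMean P X f n)
      (C := (C'.toNNReal : ℝ))
      ((hbdd n).mono fun ω hω => by simpa [Real.norm_eq_abs] using hω)
    simp only [measure_univ, ENNReal.toReal_one, inv_one, ENNReal.rpow_one, one_mul,
      ENNReal.ofReal_coe_nnreal] at this
    exact this
  exact hmart.submartingale.exists_ae_tendsto_of_bdd hsnorm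
end

section
/- Suppose the predictive distributions satisfy the recursion α_{n+1}(·) = q_n(X_1,…,X_n) α_n(·) + (1 − q_n(X_1,…,X_n)) K_n(X_{n+1}, ·) for each n ≥ 0, where q_n : S^n → (0,1) is Borel and K_n is a kernel on (S,𝓑). If Σ_n sup_{x ∈ S^n} (1 − q_n(x)) < ∞, then for each bounded Borel function f : S → ℝ one has Σ_n E| E[ f(X_{n+2}) − f(X_{n+1}) | 𝓕_n ] | < ∞, and hence α_n(f) converges almost surely. -/
open MeasureTheory ProbabilityTheory Filter Topology
open scoped ENNReal NNReal

variable {Ω S : Type*}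

/-- recursive predictive distributions: if
`α_{n+1} = q_n(X_1,…,X_n) α_n + (1 − q_n(X_1,…,X_n)) K_n(X_{n+1},·)` with `q_n : Sⁿ → (0,1)`
Borel and `K_n` kernels, and `∑_n sup_x (1 − q_n(x)) < ∞`, then each `(α_n(f))` is a
quasi-martingale and hence `α_n(f)` converges a.s. for each bounded Borel `f`. -/
theorem stmt13 [MeasurableSpace Ω]
    [TopologicalSpace S] [PolishSpace S] [MeasurableSpace S] [BorelSpace S]
    (P : Measure Ω) [IsProbabilityMeasure P]
    (X : ℕ → Ω → S) (hX : ∀ i, Measurable (X i))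
    (q : (n : ℕ) → (Fin n → S) → ℝ) (hqmeas : ∀ n, Measurable (q n))
    (hq01 : ∀ n x, q n x ∈ Set.Ioo (0 : ℝ) 1)
    (K : ℕ → S → Measure S) (hKp : ∀ n x, IsProbabilityMeasure (K n x))
    (hKmeas : ∀ n (B : Set S), MeasurableSet B → Measurable fun x => K n x B)
    (hrec : ∀ f : S → ℝ, Measurable f → (∃ C, ∀ x, |f x| ≤ C) → ∀ n,
      predMean P X f (n + 1) =ᵐ[P]
        fun ω => q n (fun i => X i.val ω) * predMean P X f n ω +
          (1 - q n (fun i => X i.val ω)) * ∫ x, f x ∂(K n (X n ω)))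
    (hsum : Summable fun n => ⨆ x : Fin n → S, (1 - q n x)) :
    ∀ f : S → ℝ, Measurable f → (∃ C, ∀ x, |f x| ≤ C) →
      (Summable fun n =>
        ∫ ω, ‖(P[(fun ω => f (X (n + 1) ω) - f (X n ω)) | Filt X n]) ω‖ ∂P) ∧
      ∀ᵐ ω ∂P, ∃ L : ℝ, Tendsto (fun n => predMean P X f n ω) atTop (𝓝 L) := by
  intro f hf hCex
  obtain ⟨C₀, hC₀⟩ := hCex
  set C : ℝ := max C₀ 0 with hCdef
  have hC : ∀ x, |f x| ≤ C := fun x => (hC₀ x).trans (le_max_left _ _)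
  have hC0 : (0 : ℝ) ≤ C := le_max_right _ _
  -- basic setup
  have hΩ : Nonempty Ω := by
    rcases isEmpty_or_nonempty Ω with h | h
    · exfalso
      have := measure_univ (μ := P)
      rw [Set.univ_eq_empty_iff.2 h] at this
      simp at this
    · exact h
  have hS : Nonempty S := ⟨X 0 (Classical.choice hΩ)⟩
  set u : ℕ → ℝ := fun n => ⨆ x : Fin n → S, (1 - q n x) with hudef
  have hbddA : ∀ n, BddAbove (Set.range fun x : Fin n → S => 1 - q n x) := by
    intro n
    refine ⟨1, ?_⟩
    rintro _ ⟨x, rfl⟩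
    have := (hq01 n x).1
    show 1 - q n x ≤ 1
    linarith
  have hle_u : ∀ n (x : Fin n → S), 1 - q n x ≤ u n := fun n x => le_ciSup (hbddA n) x
  have hu0 : ∀ n, 0 ≤ u n := by
    intro n
    have : Nonempty (Fin n → S) := ⟨fun _ => Classical.choice hS⟩
    have x₀ := Classical.arbitrary (Fin n → S)
    have h2 := (hq01 n x₀).2
    have := hle_u n x₀
    linarith
  have hsum2 : Summable (fun n => 2 * C * u n) := hsum.mul_left (2 * C)
  -- measurable space inequalities
  have hm : ∀ n, Filt X n ≤ ‹MeasurableSpace Ω› := by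
    intro n
    refine iSup₂_le fun i _ => ?_
    exact (hX i).comap_le
  have hlevel : ∀ n, Filt X n ≤ Filt X (n + 1) := by
    intro n
    refine iSup₂_le fun i hi => ?_
    exact le_iSup₂ (f := fun i (_ : i ∈ Finset.range (n+1)) => MeasurableSpace.comap (X i) inferInstance)
      i (Finset.mem_range.2 ((Finset.mem_range.1 hi).trans n.lt_succ_self))
  -- integrability of f ∘ X n
  have hint : ∀ n, Integrable (fun ω => f (X n ω)) P := by
    intro n
    refine Integrable.mono' (integrable_const C) ((hf.comp (hX n)).aestronglyMeasurable) ?_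
    exact ae_of_all _ fun ω => by simpa [Real.norm_eq_abs] using hC (X n ω)
  -- a.e. bound on |α n|
  have hαbdd : ∀ n, ∀ᵐ ω ∂P, |predMean P X f n ω| ≤ C := by
    intro n
    have : ∀ᵐ ω ∂P, |f (X n ω)| ≤ (C.toNNReal : ℝ) :=
      ae_of_all _ fun ω => by simpa [Real.coe_toNNReal C hC0] using hC (X n ω)
    have h := ae_bdd_condExp_of_ae_bdd (m := Filt X n) (μ := P) this
    filter_upwards [h] with ω hω
    simpa [predMean, Real.coe_toNNReal C hC0] using hω
  -- key a.e. bound on increments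
  have habs : ∀ n, ∀ᵐ ω ∂P,
      |predMean P X f (n + 1) ω - predMean P X f n ω| ≤ 2 * C * u n := by
    intro n
    filter_upwards [hrec f hf ⟨C, hC⟩ n, hαbdd n] with ω hω hα
    rw [hω]
    set r := q n (fun i : Fin n => X i.val ω) with hrdef
    set I := ∫ x, f x ∂(K n (X n ω)) with hIdef
    have hI : |I| ≤ C := by
      haveI := hKp n (X n ω)
      have := norm_integral_le_of_norm_le_const (μ := K n (X n ω)) (f := f) (C := C)
        (ae_of_all _ fun x => by simpa [Real.norm_eq_abs] using hC x)
      simpa [Real.norm_eq_abs, measure_univ] using this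
    have hr1 : 0 ≤ 1 - r := by
      have := (hq01 n (fun i : Fin n => X i.val ω)).2
      rw [hrdef]; linarith
    have hru : 1 - r ≤ u n := hrdef ▸ hle_u n (fun i : Fin n => X i.val ω)
    have heq : r * predMean P X f n ω + (1 - r) * I - predMean P X f n ω
        = (1 - r) * (I - predMean P X f n ω) := by ring
    rw [heq, abs_mul, abs_of_nonneg hr1]
    have hdiff : |I - predMean P X f n ω| ≤ 2 * C := by
      have := abs_sub (I) (predMean P X f n ω)
      calc |I - predMean P X f n ω| ≤ |I| + |predMean P X f n ω| := abs_sub _ _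
        _ ≤ C + C := add_le_add hI hα
        _ = 2 * C := by ring
    calc (1 - r) * |I - predMean P X f n ω| ≤ u n * (2 * C) :=
          mul_le_mul hru hdiff (abs_nonneg _) (hu0 n)
      _ = 2 * C * u n := by ring
  -- a.s. convergence
  have hconv : ∀ᵐ ω ∂P, ∃ L : ℝ, Tendsto (fun n => predMean P X f n ω) atTop (𝓝 L) := by
    have hall : ∀ᵐ ω ∂P, ∀ n,
        |predMean P X f (n + 1) ω - predMean P X f n ω| ≤ 2 * C * u n := ae_all_iff.2 habs
    filter_upwards [hall] with ω hω
    have hcau : CauchySeq (fun n => predMean P X f n ω) := by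
      refine cauchySeq_of_dist_le_of_summable (fun n => 2 * C * u n) (fun n => ?_) hsum2
      simpa [Real.dist_eq, abs_sub_comm] using hω n
    exact cauchySeq_tendsto_of_complete hcau
  refine ⟨?_, hconv⟩
  -- summability of the L¹ norms
  have hkey : ∀ n, (P[(fun ω => f (X (n + 1) ω) - f (X n ω)) | Filt X n]) =ᵐ[P]
      P[(fun ω => predMean P X f (n + 1) ω - predMean P X f n ω) | Filt X n] := by
    intro n
    have hsub1 : (P[(fun ω => f (X (n + 1) ω) - f (X n ω)) | Filt X n]) =ᵐ[P]
        (P[(fun ω => f (X (n + 1) ω)) | Filt X n]) - (P[(fun ω => f (X n ω)) | Filt X n]) := by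
      have := condExp_sub (m := Filt X n) (μ := P) (hint (n + 1)) (hint n)
      exact this
    have hsub2 : (P[(fun ω => predMean P X f (n + 1) ω - predMean P X f n ω) | Filt X n]) =ᵐ[P]
        (P[predMean P X f (n + 1) | Filt X n]) - (P[predMean P X f n | Filt X n]) := by
      have h1 : Integrable (predMean P X f (n + 1)) P := integrable_condExp
      have h2 : Integrable (predMean P X f n) P := integrable_condExp
      have := condExp_sub (m := Filt X n) (μ := P) h1 h2
      exact this
    have htow1 : (P[predMean P X f (n + 1) | Filt X n]) =ᵐ[P]
        (P[(fun ω => f (X (n + 1) ω)) | Filt X n]) :=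
      condExp_condExp_of_le (hlevel n) (hm (n + 1))
    have htow2 : (P[predMean P X f n | Filt X n]) =ᵐ[P]
        (P[(fun ω => f (X n ω)) | Filt X n]) :=
      condExp_condExp_of_le le_rfl (hm n)
    calc (P[(fun ω => f (X (n + 1) ω) - f (X n ω)) | Filt X n])
        =ᵐ[P] (P[(fun ω => f (X (n + 1) ω)) | Filt X n]) - (P[(fun ω => f (X n ω)) | Filt X n]) := hsub1
      _ =ᵐ[P] (P[predMean P X f (n + 1) | Filt X n]) - (P[predMean P X f n | Filt X n]) :=
          (htow1.sub htow2).symm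
      _ =ᵐ[P] (P[(fun ω => predMean P X f (n + 1) ω - predMean P X f n ω) | Filt X n]) := hsub2.symm
  have hbound : ∀ n,
      ∫ ω, ‖(P[(fun ω => f (X (n + 1) ω) - f (X n ω)) | Filt X n]) ω‖ ∂P ≤ 2 * C * u n := by
    intro n
    have h1 : ∫ ω, ‖(P[(fun ω => f (X (n + 1) ω) - f (X n ω)) | Filt X n]) ω‖ ∂P
        = ∫ ω, |(P[(fun ω => predMean P X f (n + 1) ω - predMean P X f n ω) | Filt X n]) ω| ∂P := by
      refine integral_congr_ae ?_
      filter_upwards [hkey n] with ω hω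
      rw [Real.norm_eq_abs, hω]
    rw [h1]
    have h2 := integral_abs_condExp_le (m := Filt X n) (μ := P)
      (fun ω => predMean P X f (n + 1) ω - predMean P X f n ω)
    refine h2.trans ?_
    have hintd : Integrable (fun ω => |predMean P X f (n + 1) ω - predMean P X f n ω|) P :=
      ((integrable_condExp.sub integrable_condExp).abs)
    have h3 : ∫ ω, |predMean P X f (n + 1) ω - predMean P X f n ω| ∂P
        ≤ ∫ _ω, (2 * C * u n) ∂P :=
      integral_mono_ae hintd (integrable_const _) (habs n)
    simpa [measure_univ] using h3
  refine Summable.of_nonneg_of_le (fun n => integral_nonneg fun ω => norm_nonneg _)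
    hbound hsum2
end

section
/- Suppose the predictive distributions are α_n(·) = (1/D_n) Σ_{i=0}^{n-1} d_i K_i(X_{i+1}, ·) for n ≥ 1, where d_n > 0 are constants, D_n = Σ_{i=0}^{n-1} d_i, and each K_i is a kernel on (S,𝓑). If Σ_n d_n / (d_0 + … + d_n) < ∞, then for each bounded Borel function f : S → ℝ one has Σ_n E| E[ f(X_{n+2}) − f(X_{n+1}) | 𝓕_n ] | < ∞, and hence α_n(f) converges almost surely. -/
open MeasureTheory ProbabilityTheory Filter Topology
open scoped ENNReal NNReal

variable {Ω S : Type*}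

/-- convex combinations of kernels: if
`α_n = (1/D_n) ∑_{i<n} d_i K_i(X_{i+1},·)` with `d_i > 0`, `D_n = ∑_{i<n} d_i`, `K_i` kernels,
and `∑_n d_n/(d_0 + ⋯ + d_n) < ∞`, then each `(α_n(f))` is a quasi-martingale and hence
`α_n(f)` converges a.s. for each bounded Borel `f`. -/
theorem stmt14 [MeasurableSpace Ω]
    [TopologicalSpace S] [PolishSpace S] [MeasurableSpace S] [BorelSpace S]
    (P : Measure Ω) [IsProbabilityMeasure P]
    (X : ℕ → Ω → S) (hX : ∀ i, Measurable (X i))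
    (d : ℕ → ℝ) (hd : ∀ n, 0 < d n)
    (K : ℕ → S → Measure S) (hKp : ∀ n x, IsProbabilityMeasure (K n x))
    (hKmeas : ∀ n (B : Set S), MeasurableSet B → Measurable fun x => K n x B)
    (hrec : ∀ f : S → ℝ, Measurable f → (∃ C, ∀ x, |f x| ≤ C) → ∀ n, 1 ≤ n →
      predMean P X f n =ᵐ[P]
        fun ω => (∑ i ∈ Finset.range n, d i * ∫ x, f x ∂(K i (X i ω))) /
          (∑ i ∈ Finset.range n, d i))
    (hsum : Summable fun n => d n / ∑ i ∈ Finset.range (n + 1), d i) :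
    ∀ f : S → ℝ, Measurable f → (∃ C, ∀ x, |f x| ≤ C) →
      (Summable fun n =>
        ∫ ω, ‖(P[(fun ω => f (X (n + 1) ω) - f (X n ω)) | Filt X n]) ω‖ ∂P) ∧
      ∀ᵐ ω ∂P, ∃ L : ℝ, Tendsto (fun n => predMean P X f n ω) atTop (𝓝 L) := by
  intro f hf hCex
  obtain ⟨C0, hC0⟩ := hCex
  set C : ℝ := max C0 0 with hCdef
  have hC : 0 ≤ C := le_max_right _ _
  have hfC : ∀ x, |f x| ≤ C := fun x => (hC0 x).trans (le_max_left _ _)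
  set Z : ℕ → Ω → ℝ := fun i ω => ∫ x, f x ∂(K i (X i ω)) with hZdef
  set A : ℕ → Ω → ℝ := fun n ω =>
    (∑ i ∈ Finset.range n, d i * Z i ω) / (∑ i ∈ Finset.range n, d i) with hAdef
  -- pointwise bounds
  have hZC : ∀ i ω, |Z i ω| ≤ C := by
    intro i ω
    have := hKp i (X i ω)
    have h := norm_integral_le_of_norm_le_const
      (μ := K i (X i ω)) (f := f) (C := C) (ae_of_all _ fun x => by
        simpa [Real.norm_eq_abs] using hfC x)
    simpa [Real.norm_eq_abs, measure_univ] using h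
  have hDpos : ∀ n, 0 < n → 0 < ∑ i ∈ Finset.range n, d i := by
    intro n hn
    exact Finset.sum_pos (fun i _ => hd i) (by simpa [Finset.nonempty_range_iff] using hn.ne')
  have hAC : ∀ n ω, |A n ω| ≤ C := by
    intro n ω
    rcases Nat.eq_zero_or_pos n with h0 | hn
    · simp [hAdef, h0, hC]
    · have hD := hDpos n hn
      rw [hAdef]
      simp only
      rw [abs_div, abs_of_pos hD, div_le_iff₀ hD]
      calc |∑ i ∈ Finset.range n, d i * Z i ω|
          ≤ ∑ i ∈ Finset.range n, |d i * Z i ω| := Finset.abs_sum_le_sum_abs _ _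
        _ ≤ ∑ i ∈ Finset.range n, d i * C := Finset.sum_le_sum fun i _ => by
            rw [abs_mul, abs_of_pos (hd i)]
            exact mul_le_mul_of_nonneg_left (hZC i ω) (hd i).le
        _ = C * ∑ i ∈ Finset.range n, d i := by rw [← Finset.sum_mul]; ring
  have hdiff : ∀ n ω, |A (n + 1) ω - A n ω|
      ≤ 2 * C * (d n / ∑ i ∈ Finset.range (n + 1), d i) := by
    intro n ω
    rcases Nat.eq_zero_or_pos n with h0 | hn
    · subst h0
      have hd0 : d 0 ≠ 0 := (hd 0).ne'
      have hA1 : A 1 ω = Z 0 ω := by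
        rw [hAdef]; simp only [Finset.sum_range_one]; field_simp
      have hA0 : A 0 ω = 0 := by simp [hAdef]
      rw [hA1, hA0, sub_zero, Finset.sum_range_one]
      have : d 0 / d 0 = 1 := div_self hd0
      rw [this, mul_one]
      calc |Z 0 ω| ≤ C := hZC 0 ω
        _ ≤ 2 * C := by linarith
    · have hD := hDpos n hn
      have hD1 := hDpos (n + 1) n.succ_pos
      have hsucc : ∑ i ∈ Finset.range (n + 1), d i
          = (∑ i ∈ Finset.range n, d i) + d n := Finset.sum_range_succ _ _
      have key : A (n + 1) ω - A n ω
          = d n / ((∑ i ∈ Finset.range n, d i) + d n) * (Z n ω - A n ω) := by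
        rw [hAdef]
        simp only
        rw [Finset.sum_range_succ (fun i => d i * Z i ω), hsucc]
        have hD' : (∑ i ∈ Finset.range n, d i) ≠ 0 := hD.ne'
        have hD1' : (∑ i ∈ Finset.range n, d i) + d n ≠ 0 := by rw [← hsucc]; exact hD1.ne'
        field_simp
        ring
      rw [key, hsucc, abs_mul]
      have hq : 0 < d n / ((∑ i ∈ Finset.range n, d i) + d n) := by
        apply div_pos (hd n); rw [← hsucc]; exact hD1
      rw [abs_of_pos hq]
      have hZA : |Z n ω - A n ω| ≤ 2 * C := by
        calc |Z n ω - A n ω| ≤ |Z n ω| + |A n ω| := abs_sub _ _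
          _ ≤ C + C := add_le_add (hZC n ω) (hAC n ω)
          _ = 2 * C := by ring
      calc d n / ((∑ i ∈ Finset.range n, d i) + d n) * |Z n ω - A n ω|
          ≤ d n / ((∑ i ∈ Finset.range n, d i) + d n) * (2 * C) :=
            mul_le_mul_of_nonneg_left hZA hq.le
        _ = 2 * C * (d n / ((∑ i ∈ Finset.range n, d i) + d n)) := by ring
  -- measurability / integrability
  have hFle : ∀ n, Filt X n ≤ (inferInstance : MeasurableSpace Ω) := by
    intro n
    apply iSup_le; intro i; apply iSup_le; intro _
    exact (hX i).comap_le
  have hFmono : ∀ n, Filt X n ≤ Filt X (n + 1) := fun n =>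
    biSup_mono fun i hi => Finset.mem_range.2
      (lt_of_lt_of_le (Finset.mem_range.1 hi) n.le_succ)
  have hgint : ∀ m, Integrable (fun ω => f (X m ω)) P := by
    intro m
    refine (integrable_const C).mono' ((hf.comp (hX m)).aestronglyMeasurable)
      (ae_of_all _ fun ω => ?_)
    simpa [Real.norm_eq_abs] using hfC (X m ω)
  have hArec : ∀ n, 1 ≤ n → predMean P X f n =ᵐ[P] A n := fun n hn =>
    hrec f hf ⟨C, hfC⟩ n hn
  have hAint : ∀ n, 1 ≤ n → Integrable (A n) P := fun n hn =>
    (integrable_condExp (m := Filt X n) (f := fun ω => f (X n ω))).congr (hArec n hn)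
  -- the key bound for the quasi-martingale sum
  have hbound : ∀ n, 1 ≤ n →
      ∫ ω, ‖(P[(fun ω => f (X (n + 1) ω) - f (X n ω)) | Filt X n]) ω‖ ∂P
        ≤ 2 * C * (d n / ∑ i ∈ Finset.range (n + 1), d i) := by
    intro n hn
    have h2 : P[(fun ω => f (X (n + 1) ω)) | Filt X n] =ᵐ[P] P[A (n + 1) | Filt X n] :=
      (condExp_condExp_of_le (hFmono n) (hFle (n + 1))).symm.trans
        (condExp_congr_ae (hArec (n + 1) (by omega)))
    have h3 : P[(fun ω => f (X n ω)) | Filt X n] =ᵐ[P] P[A n | Filt X n] :=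
      (condExp_condExp_of_le (le_refl (Filt X n)) (hFle n)).symm.trans
        (condExp_congr_ae (hArec n hn))
    have h1 : P[(fun ω => f (X (n + 1) ω) - f (X n ω)) | Filt X n]
        =ᵐ[P] P[A (n + 1) - A n | Filt X n] := by
      calc P[(fun ω => f (X (n + 1) ω) - f (X n ω)) | Filt X n]
          =ᵐ[P] P[(fun ω => f (X (n + 1) ω)) | Filt X n]
            - P[(fun ω => f (X n ω)) | Filt X n] := condExp_sub (hgint (n + 1)) (hgint n) (Filt X n)
        _ =ᵐ[P] P[A (n + 1) | Filt X n] - P[A n | Filt X n] := h2.sub h3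
        _ =ᵐ[P] P[A (n + 1) - A n | Filt X n] :=
            (condExp_sub (hAint (n + 1) (by omega)) (hAint n hn) (Filt X n)).symm
    have heq : (fun ω => ‖(P[(fun ω => f (X (n + 1) ω) - f (X n ω)) | Filt X n]) ω‖)
        =ᵐ[P] fun ω => ‖(P[A (n + 1) - A n | Filt X n]) ω‖ :=
      h1.mono fun ω hω => by simp only [hω]
    rw [integral_congr_ae heq]
    calc ∫ ω, ‖(P[A (n + 1) - A n | Filt X n]) ω‖ ∂P
        = ∫ ω, |(P[A (n + 1) - A n | Filt X n]) ω| ∂P := by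
          simp [Real.norm_eq_abs]
      _ ≤ ∫ ω, |(A (n + 1) - A n) ω| ∂P := integral_abs_condExp_le _
      _ ≤ ∫ _ω, 2 * C * (d n / ∑ i ∈ Finset.range (n + 1), d i) ∂P := by
          refine integral_mono ((hAint (n + 1) (by omega)).sub (hAint n hn)).abs
            (integrable_const _) fun ω => ?_
          simpa [Pi.sub_apply] using hdiff n ω
      _ = 2 * C * (d n / ∑ i ∈ Finset.range (n + 1), d i) := by
          simp [measure_univ]
  constructor
  · -- summability
    apply (summable_nat_add_iff 1).1
    refine Summable.of_nonneg_of_le (fun n => integral_nonneg fun ω => norm_nonneg _)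
      (fun n => hbound (n + 1) (by omega)) ?_
    exact ((summable_nat_add_iff 1).2 hsum).mul_left (2 * C)
  · -- a.s. convergence
    have hconv : ∀ ω, ∃ L, Tendsto (fun n => A n ω) atTop (𝓝 L) := by
      intro ω
      have hc : CauchySeq (fun n => A n ω) := by
        apply cauchySeq_of_summable_dist
        refine Summable.of_nonneg_of_le (fun n => dist_nonneg) (fun n => ?_)
          (hsum.mul_left (2 * C))
        rw [Real.dist_eq, abs_sub_comm]
        exact hdiff n ω
      exact cauchySeq_tendsto_of_complete hc
    have hae : ∀ᵐ ω ∂P, ∀ n : ℕ, predMean P X f (n + 1) ω = A (n + 1) ω :=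
      ae_all_iff.2 fun n => hArec (n + 1) (by omega)
    refine hae.mono fun ω hω => ?_
    obtain ⟨L, hL⟩ := hconv ω
    refine ⟨L, hL.congr' ?_⟩
    refine eventually_atTop.2 ⟨1, fun n hn => ?_⟩
    cases n with
    | zero => omega
    | succ m => exact (hω m).symm
end

section
/- Let (𝓖_n) be a filtration with 𝓖_0 = {∅,Ω} and 𝓖_n ⊂ 𝓕_n for each n, let β_n(·) = P(X_{n+1} ∈ · | 𝓖_n), and assume E[f(X_k) | 𝓖_n] = E[f(X_{n+1}) | 𝓖_n] a.s. for all k > n ≥ 0 and all bounded Borel f. If lim_n E[α_n(f)²] = lim_n E[β_n(f)²] for each bounded Borel function f : S → ℝ, then for each bounded Borel f the sequence α_n(f) converges in probability. Conversely, if moreover σ(⋃_n 𝓖_n) = σ(⋃_n 𝓕_n) and each α_n(f) converges in probability, then lim_n E[α_n(f)²] = lim_n E[β_n(f)²] for each bounded Borel f. -/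
open MeasureTheory ProbabilityTheory Filter Topology
open scoped ENNReal NNReal

variable {Ω S : Type*}


section Helpers
variable {Ω : Type*}

lemma abs_sub'' (a b : ℝ) : |a - b| ≤ |a| + |b| := by
  rw [sub_eq_add_neg]
  exact (abs_add_le _ _).trans (by rw [abs_neg])


/-- A measurable (w.r.t. a sub-σ-algebra `m`) function computing limits of a pointwise
convergent sequence of `m`-measurable functions. -/
lemma exists_meas_limit {m : MeasurableSpace Ω} {f : ℕ → Ω → ℝ}
    (hf : ∀ n, Measurable[m] (f n)) :
    ∃ g : Ω → ℝ, Measurable[m] g ∧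
      ∀ ω c, Tendsto (fun n => f n ω) atTop (𝓝 c) → g ω = c := by
  classical
  letI := m
  have hs : MeasurableSet[m] {ω | ∃ c, Tendsto (fun n => f n ω) atTop (𝓝 c)} :=
    measurableSet_exists_tendsto hf
  refine ⟨fun ω => if h : ∃ c, Tendsto (fun n => f n ω) atTop (𝓝 c) then h.choose else 0,
    ?_, ?_⟩
  · apply measurable_of_tendsto_metrizable' atTop
      (f := fun n => Set.indicator {ω | ∃ c, Tendsto (fun k => f k ω) atTop (𝓝 c)} (f n))
    · exact fun n => (hf n).indicator hs
    · rw [tendsto_pi_nhds]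
      intro ω
      by_cases h : ∃ c, Tendsto (fun n => f n ω) atTop (𝓝 c)
      · have hmem : ω ∈ {ω | ∃ c, Tendsto (fun k => f k ω) atTop (𝓝 c)} := h
        simp only [Set.indicator_of_mem hmem, dif_pos h]
        exact h.choose_spec
      · have hmem : ω ∉ {ω | ∃ c, Tendsto (fun k => f k ω) atTop (𝓝 c)} := h
        simp only [Set.indicator_of_notMem hmem, dif_neg h]
        exact tendsto_const_nhds
  · intro ω c hc
    have hex : ∃ c, Tendsto (fun n => f n ω) atTop (𝓝 c) := ⟨c, hc⟩
    simp only [dif_pos hex]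
    exact tendsto_nhds_unique hex.choose_spec hc

/-- Sums of sequences tending in measure tend in measure. -/
lemma tim_add [MeasurableSpace Ω] {P : Measure Ω} {f g : ℕ → Ω → ℝ} {F G : Ω → ℝ}
    (hf : TendstoInMeasure P f atTop F) (hg : TendstoInMeasure P g atTop G) :
    TendstoInMeasure P (fun n ω => f n ω + g n ω) atTop (fun ω => F ω + G ω) := by
  rw [tendstoInMeasure_iff_dist] at hf hg ⊢
  intro ε hε
  have hε2 : (0 : ℝ) < ε / 2 := by positivity
  have hsub : ∀ n, {ω | ε ≤ dist (f n ω + g n ω) (F ω + G ω)} ⊆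
      {ω | ε / 2 ≤ dist (f n ω) (F ω)} ∪ {ω | ε / 2 ≤ dist (g n ω) (G ω)} := by
    intro n ω hω
    simp only [Set.mem_setOf_eq] at hω
    simp only [Set.mem_union, Set.mem_setOf_eq]
    by_contra hcon
    push_neg at hcon
    have htri := dist_add_add_le (f n ω) (g n ω) (F ω) (G ω)
    linarith [hcon.1, hcon.2]
  have hb := (hf (ε / 2) hε2).add (hg (ε / 2) hε2)
  rw [add_zero] at hb
  refine tendsto_of_tendsto_of_tendsto_of_le_of_le tendsto_const_nhds hb
    (fun n => zero_le) (fun n => ?_)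
  exact (measure_mono (hsub n)).trans (measure_union_le _ _)

/-- Integrability from an a.e. bound. -/
lemma int_of_bdd [MeasurableSpace Ω] {P : Measure Ω} [IsFiniteMeasure P] {g : Ω → ℝ} {c : ℝ}
    (hm : AEStronglyMeasurable g P) (hb : ∀ᵐ ω ∂P, |g ω| ≤ c) : Integrable g P :=
  Integrable.mono' (integrable_const c) hm
    (by filter_upwards [hb] with ω h using by rwa [Real.norm_eq_abs])

lemma int_sq_of_bdd [MeasurableSpace Ω] {P : Measure Ω} [IsFiniteMeasure P] {g : Ω → ℝ} {c : ℝ}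
    (hm : AEStronglyMeasurable g P) (hb : ∀ᵐ ω ∂P, |g ω| ≤ c) :
    Integrable (fun ω => (g ω) ^ 2) P := by
  refine int_of_bdd (c := c ^ 2)
    ((hm.mul hm).congr (Eventually.of_forall fun ω => (pow_two _).symm)) ?_
  filter_upwards [hb] with ω h
  rw [abs_pow]
  nlinarith [abs_nonneg (g ω)]

/-- Chebyshev: if `∫ gₙ² → 0` then `gₙ → 0` in measure. -/
lemma tim_zero_of_sq [MeasurableSpace Ω] (P : Measure Ω) [IsProbabilityMeasure P]
    {g : ℕ → Ω → ℝ}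
    (hmeas : ∀ n, AEStronglyMeasurable (g n) P)
    (hint : ∀ n, Integrable (fun ω => (g n ω) ^ 2) P)
    (h : Tendsto (fun n => ∫ ω, (g n ω) ^ 2 ∂P) atTop (𝓝 0)) :
    TendstoInMeasure P g atTop (fun _ => (0 : ℝ)) := by
  rw [tendstoInMeasure_iff_dist]
  intro ε hε
  have hkey : ∀ n, P {ω | ε ≤ dist (g n ω) 0} ≤
      ENNReal.ofReal ((∫ ω, (g n ω) ^ 2 ∂P) / ε ^ 2) := by
    intro n
    have hsub : {ω | ε ≤ dist (g n ω) 0} ⊆ {ω | ε ^ 2 ≤ (g n ω) ^ 2} := by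
      intro ω hω
      simp only [Set.mem_setOf_eq, Real.dist_eq, sub_zero] at hω ⊢
      nlinarith [abs_nonneg (g n ω), sq_abs (g n ω)]
    have hM := mul_meas_ge_le_integral_of_nonneg
      (Eventually.of_forall fun ω => sq_nonneg (g n ω)) (hint n) (ε ^ 2)
    have hps : (P {ω | ε ≤ dist (g n ω) 0}).toReal ≤ (P {ω | ε ^ 2 ≤ (g n ω) ^ 2}).toReal :=
      ENNReal.toReal_mono (measure_ne_top _ _) (measure_mono hsub)
    have h2 : (P {ω | ε ≤ dist (g n ω) 0}).toReal ≤ (∫ ω, (g n ω) ^ 2 ∂P) / ε ^ 2 := by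
      rw [le_div_iff₀ (by positivity)]
      rw [measureReal_def] at hM
      nlinarith [sq_nonneg ε]
    refine (ENNReal.le_ofReal_iff_toReal_le (measure_ne_top _ _) ?_).mpr h2
    have : 0 ≤ ∫ ω, (g n ω) ^ 2 ∂P := integral_nonneg fun ω => sq_nonneg _
    positivity
  have hb : Tendsto (fun n => ENNReal.ofReal ((∫ ω, (g n ω) ^ 2 ∂P) / ε ^ 2)) atTop (𝓝 0) := by
    rw [← ENNReal.ofReal_zero]
    refine ENNReal.tendsto_ofReal ?_
    simpa using h.div_const (ε ^ 2)
  exact tendsto_of_tendsto_of_tendsto_of_le_of_le tendsto_const_nhds hb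
    (fun n => zero_le) hkey

/-- If bounded `gₙ → h` in `L¹`, then `∫ gₙ² → ∫ h²`. -/
lemma tendsto_integral_sq [MeasurableSpace Ω] (P : Measure Ω) [IsProbabilityMeasure P]
    {g : ℕ → Ω → ℝ} {h : Ω → ℝ} {c : ℝ} (hc : 0 ≤ c)
    (hgm : ∀ n, AEStronglyMeasurable (g n) P) (hhm : AEStronglyMeasurable h P)
    (hgb : ∀ n, ∀ᵐ ω ∂P, |g n ω| ≤ c) (hhb : ∀ᵐ ω ∂P, |h ω| ≤ c)
    (T : Tendsto (fun n => ∫ ω, |g n ω - h ω| ∂P) atTop (𝓝 0)) :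
    Tendsto (fun n => ∫ ω, (g n ω) ^ 2 ∂P) atTop (𝓝 (∫ ω, (h ω) ^ 2 ∂P)) := by
  have hint_h2 : Integrable (fun ω => (h ω) ^ 2) P := int_sq_of_bdd hhm hhb
  have hint_h : Integrable h P := int_of_bdd hhm hhb
  rw [← tendsto_sub_nhds_zero_iff]
  have key : ∀ n, |∫ ω, (g n ω) ^ 2 ∂P - ∫ ω, (h ω) ^ 2 ∂P| ≤
      2 * c * ∫ ω, |g n ω - h ω| ∂P := by
    intro n
    have hint_g2 : Integrable (fun ω => (g n ω) ^ 2) P := int_sq_of_bdd (hgm n) (hgb n)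
    have hint_g : Integrable (g n) P := int_of_bdd (hgm n) (hgb n)
    have hint_d : Integrable (fun ω => |g n ω - h ω|) P := (hint_g.sub hint_h).abs
    have e1 : ∫ ω, (g n ω) ^ 2 ∂P - ∫ ω, (h ω) ^ 2 ∂P
        = ∫ ω, ((g n ω) ^ 2 - (h ω) ^ 2) ∂P := (integral_sub hint_g2 hint_h2).symm
    rw [e1]
    have e2 : |∫ ω, ((g n ω) ^ 2 - (h ω) ^ 2) ∂P| ≤ ∫ ω, |(g n ω) ^ 2 - (h ω) ^ 2| ∂P := by
      simpa [Real.norm_eq_abs] using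
        norm_integral_le_integral_norm (fun ω => (g n ω) ^ 2 - (h ω) ^ 2) (μ := P)
    refine e2.trans ?_
    have e3 : ∫ ω, |(g n ω) ^ 2 - (h ω) ^ 2| ∂P ≤ ∫ ω, 2 * c * |g n ω - h ω| ∂P := by
      refine integral_mono_ae ((hint_g2.sub hint_h2).abs) (hint_d.const_mul _) ?_
      filter_upwards [hgb n, hhb] with ω h1 h2
      have : (g n ω) ^ 2 - (h ω) ^ 2 = (g n ω - h ω) * (g n ω + h ω) := by ring
      rw [this, abs_mul]
      calc |g n ω - h ω| * |g n ω + h ω| ≤ |g n ω - h ω| * (2 * c) := by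
            refine mul_le_mul_of_nonneg_left ?_ (abs_nonneg _)
            calc |g n ω + h ω| ≤ |g n ω| + |h ω| := abs_add_le _ _
            _ ≤ 2 * c := by linarith
      _ = 2 * c * |g n ω - h ω| := by ring
    refine e3.trans ?_
    rw [integral_const_mul]
  have hub : Tendsto (fun n => 2 * c * ∫ ω, |g n ω - h ω| ∂P) atTop (𝓝 0) := by
    simpa using T.const_mul (2 * c)
  exact tendsto_of_tendsto_of_tendsto_of_le_of_le (by simpa using hub.neg) hub
    (fun n => (abs_le.mp (key n)).1) (fun n => (abs_le.mp (key n)).2)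

end Helpers

/-- Theorem `g65cx3`: let `(𝓖_n)` be a filtration with `𝓖_0` trivial and
`𝓖_n ⊆ 𝓕_n`, `β_n(f) = E[f(X_{n+1}) ∣ 𝓖_n]`, and suppose `E[f(X_k) ∣ 𝓖_n] = E[f(X_{n+1}) ∣ 𝓖_n]`
a.s. for `k > n`. If `lim_n E[α_n(f)²] = lim_n E[β_n(f)²]` for each bounded Borel `f`, then each
`α_n(f)` converges in probability; conversely, if moreover `𝓖_∞ = 𝓕_∞` and each `α_n(f)`
converges in probability, then `lim_n E[α_n(f)²] = lim_n E[β_n(f)²]` for each bounded Borel `f`. -/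
theorem stmt15 [MeasurableSpace Ω]
    [TopologicalSpace S] [PolishSpace S] [MeasurableSpace S] [BorelSpace S]
    (P : Measure Ω) [IsProbabilityMeasure P]
    (X : ℕ → Ω → S) (hX : ∀ i, Measurable (X i))
    (G : ℕ → MeasurableSpace Ω) (hG0 : G 0 = ⊥) (hGmono : Monotone G)
    (hGF : ∀ n, G n ≤ Filt X n)
    (hcid : ∀ f : S → ℝ, Measurable f → (∃ C, ∀ x, |f x| ≤ C) → ∀ n k : ℕ, n ≤ k →
      P[(fun ω => f (X k ω)) | G n] =ᵐ[P] P[(fun ω => f (X n ω)) | G n]) :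
    ((∀ f : S → ℝ, Measurable f → (∃ C, ∀ x, |f x| ≤ C) →
        ∃ L : ℝ, Tendsto (fun n => ∫ ω, (predMean P X f n ω) ^ 2 ∂P) atTop (𝓝 L) ∧
          Tendsto (fun n => ∫ ω, ((P[(fun ω => f (X n ω)) | G n]) ω) ^ 2 ∂P) atTop (𝓝 L)) →
      ∀ f : S → ℝ, Measurable f → (∃ C, ∀ x, |f x| ≤ C) →
        ∃ l : Ω → ℝ, TendstoInMeasure P (fun n => predMean P X f n) atTop l) ∧
    ((⨆ n, G n) = (⨆ n, Filt X n) →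
      (∀ f : S → ℝ, Measurable f → (∃ C, ∀ x, |f x| ≤ C) →
        ∃ l : Ω → ℝ, TendstoInMeasure P (fun n => predMean P X f n) atTop l) →
      ∀ f : S → ℝ, Measurable f → (∃ C, ∀ x, |f x| ≤ C) →
        ∃ L : ℝ, Tendsto (fun n => ∫ ω, (predMean P X f n ω) ^ 2 ∂P) atTop (𝓝 L) ∧
          Tendsto (fun n => ∫ ω, ((P[(fun ω => f (X n ω)) | G n]) ω) ^ 2 ∂P) atTop (𝓝 L)) := by
  constructor
  · -- limits equal → convergence in probability
    intro H f hfm hCb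
    obtain ⟨C, hC⟩ := hCb
    obtain ⟨L, hLa, hLb⟩ := H f hfm ⟨C, hC⟩
    have hC'0 : (0:ℝ) ≤ max C 0 := le_max_right _ _
    have hfb : ∀ x, |f x| ≤ max C 0 := fun x => (hC x).trans (le_max_left _ _)
    have hle : ∀ n, Filt X n ≤ ‹MeasurableSpace Ω› :=
      fun n => iSup₂_le fun i _ => (hX i).comap_le
    have hGle : ∀ n, G n ≤ ‹MeasurableSpace Ω› := fun n => (hGF n).trans (hle n)
    have hfXm : ∀ n, AEStronglyMeasurable (fun ω => f (X n ω)) P :=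
      fun n => (hfm.comp (hX n)).aestronglyMeasurable
    have hfXint : ∀ n, Integrable (fun ω => f (X n ω)) P :=
      fun n => int_of_bdd (hfXm n) (Eventually.of_forall fun ω => hfb _)
    have hαeq : ∀ n, predMean P X f n = P[(fun ω => f (X n ω)) | Filt X n] := fun _ => rfl
    have hαm : ∀ n, AEStronglyMeasurable (predMean P X f n) P := fun n => by
      rw [hαeq]
      exact (stronglyMeasurable_condExp.mono (hle n)).aestronglyMeasurable
    have hβm : ∀ n, AEStronglyMeasurable (P[(fun ω => f (X n ω)) | G n]) P :=
      fun n => (stronglyMeasurable_condExp.mono (hGle n)).aestronglyMeasurable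
    have hαb : ∀ n, ∀ᵐ ω ∂P, |predMean P X f n ω| ≤ max C 0 := by
      intro n
      rw [hαeq]
      have h := ae_bdd_condExp_of_ae_bdd (m := Filt X n) (μ := P)
        (R := (max C 0).toNNReal) (f := fun ω => f (X n ω))
        (Eventually.of_forall fun ω => by
          rw [Real.coe_toNNReal _ hC'0]; exact hfb _)
      filter_upwards [h] with ω hω
      rwa [Real.coe_toNNReal _ hC'0] at hω
    have hβb : ∀ n, ∀ᵐ ω ∂P, |(P[(fun ω => f (X n ω)) | G n]) ω| ≤ max C 0 := by
      intro n
      have h := ae_bdd_condExp_of_ae_bdd (m := G n) (μ := P)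
        (R := (max C 0).toNNReal) (f := fun ω => f (X n ω))
        (Eventually.of_forall fun ω => by
          rw [Real.coe_toNNReal _ hC'0]; exact hfb _)
      filter_upwards [h] with ω hω
      rwa [Real.coe_toNNReal _ hC'0] at hω
    have hαint : ∀ n, Integrable (predMean P X f n) P := fun n => int_of_bdd (hαm n) (hαb n)
    have hβint : ∀ n, Integrable (P[(fun ω => f (X n ω)) | G n]) P :=
      fun n => int_of_bdd (hβm n) (hβb n)
    have htow : ∀ n, P[predMean P X f n | G n] =ᵐ[P] P[(fun ω => f (X n ω)) | G n] := by
      intro n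
      rw [hαeq]
      exact condExp_condExp_of_le (hGF n) (hle n)
    have hprod_int : ∀ n, Integrable (fun ω => (P[(fun ω => f (X n ω)) | G n]) ω
        * predMean P X f n ω) P := by
      intro n
      refine int_of_bdd (c := max C 0 * max C 0) ((hβm n).mul (hαm n)) ?_
      filter_upwards [hαb n, hβb n] with ω h1 h2
      rw [abs_mul]
      exact mul_le_mul h2 h1 (abs_nonneg _) hC'0
    have key : ∀ n, ∫ ω, (P[(fun ω => f (X n ω)) | G n]) ω * predMean P X f n ω ∂P
        = ∫ ω, ((P[(fun ω => f (X n ω)) | G n]) ω) ^ 2 ∂P := by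
      intro n
      have h1 : ∫ ω, (P[(fun ω => f (X n ω)) | G n]) ω * predMean P X f n ω ∂P
          = ∫ ω, (P[(fun ω => (P[(fun ω => f (X n ω)) | G n]) ω * predMean P X f n ω) | G n]) ω ∂P :=
        (integral_condExp (hGle n)).symm
      have h2 : P[(fun ω => (P[(fun ω => f (X n ω)) | G n]) ω * predMean P X f n ω) | G n]
          =ᵐ[P] (P[(fun ω => f (X n ω)) | G n]) * P[predMean P X f n | G n] :=
        condExp_mul_of_stronglyMeasurable_left (m := G n) (μ := P)
          stronglyMeasurable_condExp (hprod_int n) (hαint n)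
      have h3 : P[(fun ω => (P[(fun ω => f (X n ω)) | G n]) ω * predMean P X f n ω) | G n]
          =ᵐ[P] fun ω => ((P[(fun ω => f (X n ω)) | G n]) ω) ^ 2 := by
        filter_upwards [h2, htow n] with ω ha hb
        rw [ha, Pi.mul_apply, hb, pow_two]
      rw [h1, integral_congr_ae h3]
    have hdiff : ∀ n, ∫ ω, (predMean P X f n ω - (P[(fun ω => f (X n ω)) | G n]) ω) ^ 2 ∂P
        = (∫ ω, (predMean P X f n ω) ^ 2 ∂P)
          - ∫ ω, ((P[(fun ω => f (X n ω)) | G n]) ω) ^ 2 ∂P := by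
      intro n
      have hα2 : Integrable (fun ω => (predMean P X f n ω) ^ 2) P :=
        int_sq_of_bdd (hαm n) (hαb n)
      have hβ2 : Integrable (fun ω => ((P[(fun ω => f (X n ω)) | G n]) ω) ^ 2) P :=
        int_sq_of_bdd (hβm n) (hβb n)
      have e1 : (fun ω => (predMean P X f n ω - (P[(fun ω => f (X n ω)) | G n]) ω) ^ 2)
          =ᵐ[P] fun ω => (predMean P X f n ω) ^ 2
            - 2 * ((P[(fun ω => f (X n ω)) | G n]) ω * predMean P X f n ω)
            + ((P[(fun ω => f (X n ω)) | G n]) ω) ^ 2 :=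
        Eventually.of_forall fun ω => by ring
      have hprod2 : Integrable (fun ω => 2 * ((P[(fun ω => f (X n ω)) | G n]) ω
          * predMean P X f n ω)) P := (hprod_int n).const_mul 2
      have hsub2 : Integrable (fun ω => (predMean P X f n ω) ^ 2
          - 2 * ((P[(fun ω => f (X n ω)) | G n]) ω * predMean P X f n ω)) P := hα2.sub hprod2
      rw [integral_congr_ae e1, integral_add hsub2 hβ2, integral_sub hα2 hprod2,
        integral_const_mul, key n]
      ring
    have hdiffT : Tendsto (fun n => ∫ ω, (predMean P X f n ω
        - (P[(fun ω => f (X n ω)) | G n]) ω) ^ 2 ∂P) atTop (𝓝 0) := by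
      have h0 := hLa.sub hLb
      rw [sub_self] at h0
      exact h0.congr fun n => (hdiff n).symm
    have TIM1 : TendstoInMeasure P
        (fun n ω => predMean P X f n ω - (P[(fun ω => f (X n ω)) | G n]) ω) atTop
        (fun _ => (0:ℝ)) := by
      refine tim_zero_of_sq P (fun n => (hαm n).sub (hβm n)) (fun n => ?_) hdiffT
      refine int_sq_of_bdd (c := 2 * max C 0) ((hαm n).sub (hβm n)) ?_
      filter_upwards [hαb n, hβb n] with ω h1 h2
      linarith [abs_sub'' (predMean P X f n ω) ((P[(fun ω => f (X n ω)) | G n]) ω)]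
    have hmart : Martingale (fun n => P[(fun ω => f (X n ω)) | G n])
        ⟨G, hGmono, hGle⟩ P := by
      constructor
      · exact fun n => stronglyMeasurable_condExp
      · intro i j hij
        have t1 : P[P[(fun ω => f (X j ω)) | G j] | G i] =ᵐ[P] P[(fun ω => f (X j ω)) | G i] :=
          condExp_condExp_of_le (hGmono hij) (hGle j)
        exact t1.trans (hcid f hfm ⟨C, hC⟩ i j hij)
    have hbddβ : ∀ n, eLpNorm (P[(fun ω => f (X n ω)) | G n]) 1 P
        ≤ ((max C 0).toNNReal : ℝ≥0∞) := by
      intro n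
      have h := eLpNorm_le_of_ae_bound (p := 1) (μ := P)
        (f := P[(fun ω => f (X n ω)) | G n]) (C := max C 0)
        (by filter_upwards [hβb n] with ω hω using by rwa [Real.norm_eq_abs])
      simpa [measure_univ, ENNReal.ofReal] using h
    have hβlim := hmart.submartingale.ae_tendsto_limitProcess hbddβ
    have TIM2 : TendstoInMeasure P (fun n => P[(fun ω => f (X n ω)) | G n]) atTop
        (Filtration.limitProcess (fun n => P[(fun ω => f (X n ω)) | G n])
          ⟨G, hGmono, hGle⟩ P) :=
      tendstoInMeasure_of_tendsto_ae (fun n => hβm n) hβlim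
    have hadd := tim_add TIM1 TIM2
    exact ⟨_, TendstoInMeasure.congr
      (fun i => Eventually.of_forall fun ω => by ring) EventuallyEq.rfl hadd⟩
  · -- convergence in probability → limits equal
    intro hsup H f hfm hCb
    obtain ⟨C, hC⟩ := hCb
    obtain ⟨l, hl⟩ := H f hfm ⟨C, hC⟩
    have hC'0 : (0:ℝ) ≤ max C 0 := le_max_right _ _
    have hfb : ∀ x, |f x| ≤ max C 0 := fun x => (hC x).trans (le_max_left _ _)
    have hle : ∀ n, Filt X n ≤ ‹MeasurableSpace Ω› :=
      fun n => iSup₂_le fun i _ => (hX i).comap_le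
    have hGle : ∀ n, G n ≤ ‹MeasurableSpace Ω› := fun n => (hGF n).trans (hle n)
    have hfXm : ∀ n, AEStronglyMeasurable (fun ω => f (X n ω)) P :=
      fun n => (hfm.comp (hX n)).aestronglyMeasurable
    have hfXint : ∀ n, Integrable (fun ω => f (X n ω)) P :=
      fun n => int_of_bdd (hfXm n) (Eventually.of_forall fun ω => hfb _)
    have hαeq : ∀ n, predMean P X f n = P[(fun ω => f (X n ω)) | Filt X n] := fun _ => rfl
    have hαm : ∀ n, AEStronglyMeasurable (predMean P X f n) P := fun n => by
      rw [hαeq]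
      exact (stronglyMeasurable_condExp.mono (hle n)).aestronglyMeasurable
    have hβm : ∀ n, AEStronglyMeasurable (P[(fun ω => f (X n ω)) | G n]) P :=
      fun n => (stronglyMeasurable_condExp.mono (hGle n)).aestronglyMeasurable
    have hαb : ∀ n, ∀ᵐ ω ∂P, |predMean P X f n ω| ≤ max C 0 := by
      intro n
      rw [hαeq]
      have h := ae_bdd_condExp_of_ae_bdd (m := Filt X n) (μ := P)
        (R := (max C 0).toNNReal) (f := fun ω => f (X n ω))
        (Eventually.of_forall fun ω => by
          rw [Real.coe_toNNReal _ hC'0]; exact hfb _)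
      filter_upwards [h] with ω hω
      rwa [Real.coe_toNNReal _ hC'0] at hω
    have hβb : ∀ n, ∀ᵐ ω ∂P, |(P[(fun ω => f (X n ω)) | G n]) ω| ≤ max C 0 := by
      intro n
      have h := ae_bdd_condExp_of_ae_bdd (m := G n) (μ := P)
        (R := (max C 0).toNNReal) (f := fun ω => f (X n ω))
        (Eventually.of_forall fun ω => by
          rw [Real.coe_toNNReal _ hC'0]; exact hfb _)
      filter_upwards [h] with ω hω
      rwa [Real.coe_toNNReal _ hC'0] at hω
    have hαint : ∀ n, Integrable (predMean P X f n) P := fun n => int_of_bdd (hαm n) (hαb n)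
    have hβint : ∀ n, Integrable (P[(fun ω => f (X n ω)) | G n]) P :=
      fun n => int_of_bdd (hβm n) (hβb n)
    have htow : ∀ n, P[predMean P X f n | G n] =ᵐ[P] P[(fun ω => f (X n ω)) | G n] := by
      intro n
      rw [hαeq]
      exact condExp_condExp_of_le (hGF n) (hle n)
    have hαms : ∀ n, Measurable[⨆ k, Filt X k] (predMean P X f n) := fun n =>
      stronglyMeasurable_condExp.measurable.mono (le_iSup (fun k => Filt X k) n) le_rfl
    obtain ⟨ns, hns_mono, hns⟩ := hl.exists_seq_tendsto_ae
    obtain ⟨l₀, hl₀m, hl₀⟩ := exists_meas_limit (m := ⨆ k, Filt X k) (fun k => hαms (ns k))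
    have hlb : ∀ᵐ ω ∂P, Tendsto (fun k => predMean P X f (ns k) ω) atTop (𝓝 (l ω))
        ∧ |l ω| ≤ max C 0 := by
      filter_upwards [hns, ae_all_iff.mpr fun k => hαb (ns k)] with ω h hb
      exact ⟨h, le_of_tendsto h.abs (Eventually.of_forall fun k => hb k)⟩
    set l' : Ω → ℝ := fun ω => max (-(max C 0)) (min (l₀ ω) (max C 0)) with hl'def
    have hl'm : Measurable[⨆ k, Filt X k] l' := measurable_const.max (hl₀m.min measurable_const)
    have hl'b : ∀ ω, |l' ω| ≤ max C 0 := by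
      intro ω
      rw [abs_le]
      constructor
      · rw [hl'def]; exact le_max_left _ _
      · rw [hl'def]; exact max_le (neg_le_self hC'0) (min_le_right _ _)
    have hll' : l =ᵐ[P] l' := by
      filter_upwards [hlb] with ω hω
      obtain ⟨h, hb⟩ := hω
      have h0 : l₀ ω = l ω := hl₀ ω (l ω) h
      have hab := abs_le.mp hb
      rw [hl'def]
      simp only
      rw [h0, min_eq_left hab.2, max_eq_right hab.1]
    have hl'sm : AEStronglyMeasurable l' P :=
      ((hl'm.mono (iSup_le hle) le_rfl).stronglyMeasurable).aestronglyMeasurable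
    have hl'int : Integrable l' P := int_of_bdd hl'sm (Eventually.of_forall hl'b)
    have T : Tendsto (fun n => ∫ ω, |predMean P X f n ω - l' ω| ∂P) atTop (𝓝 0) := by
      refine tendsto_of_subseq_tendsto fun ms hms => ?_
      have htim : TendstoInMeasure P (fun k => predMean P X f (ms k)) atTop l :=
        fun ε hε => (hl ε hε).comp hms
      obtain ⟨ks, -, hks⟩ := htim.exists_seq_tendsto_ae
      refine ⟨ks, ?_⟩
      have hdc := tendsto_integral_of_dominated_convergence (μ := P)
        (F := fun k ω => |predMean P X f (ms (ks k)) ω - l' ω|) (f := fun _ => (0:ℝ))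
        (bound := fun _ => 2 * max C 0)
        (fun k => ((hαm (ms (ks k))).sub hl'sm).norm)
        (integrable_const _)
        (fun k => by
          filter_upwards [hαb (ms (ks k))] with ω h1
          rw [Real.norm_eq_abs, abs_abs]
          linarith [abs_sub'' (predMean P X f (ms (ks k)) ω) (l' ω), hl'b ω])
        (by
          filter_upwards [hks, hll'] with ω h1 h2
          rw [h2] at h1
          simpa using (h1.sub (tendsto_const_nhds (x := l' ω))).abs)
      simpa using hdc
    refine ⟨∫ ω, (l' ω) ^ 2 ∂P, ?_, ?_⟩
    · exact tendsto_integral_sq P hC'0 hαm hl'sm hαb (Eventually.of_forall hl'b) T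
    · have hγm : ∀ n, AEStronglyMeasurable (P[l' | G n]) P :=
        fun n => (stronglyMeasurable_condExp.mono (hGle n)).aestronglyMeasurable
      have hγb : ∀ n, ∀ᵐ ω ∂P, |(P[l' | G n]) ω| ≤ max C 0 := by
        intro n
        have h := ae_bdd_condExp_of_ae_bdd (m := G n) (μ := P) (R := (max C 0).toNNReal)
          (f := l') (Eventually.of_forall fun ω => by
            rw [Real.coe_toNNReal _ hC'0]; exact hl'b _)
        filter_upwards [h] with ω hω
        rwa [Real.coe_toNNReal _ hC'0] at hω
      have hγint : ∀ n, Integrable (P[l' | G n]) P := fun n => int_of_bdd (hγm n) (hγb n)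
      have Ta : ∀ n, ∫ ω, |(P[(fun ω => f (X n ω)) | G n]) ω - (P[l' | G n]) ω| ∂P
          ≤ ∫ ω, |predMean P X f n ω - l' ω| ∂P := by
        intro n
        have hsub := condExp_sub (μ := P) (m := G n) (hαint n) hl'int
        have h1 : ∀ᵐ ω ∂P, (P[predMean P X f n - l' | G n]) ω
            = (P[(fun ω => f (X n ω)) | G n]) ω - (P[l' | G n]) ω := by
          filter_upwards [hsub, htow n] with ω ha hb
          rw [ha, Pi.sub_apply, hb]
        have e1 : ∫ ω, |(P[(fun ω => f (X n ω)) | G n]) ω - (P[l' | G n]) ω| ∂P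
            = ∫ ω, |(P[predMean P X f n - l' | G n]) ω| ∂P := by
          refine integral_congr_ae ?_
          filter_upwards [h1] with ω hω
          rw [hω]
        rw [e1]
        have e2 := integral_abs_condExp_le (m := G n) (μ := P) (predMean P X f n - l')
        exact e2.trans (le_of_eq (integral_congr_ae (Eventually.of_forall fun ω => rfl)))
      have hsmG : Measurable[⨆ n, G n] l' := by rw [hsup]; exact hl'm
      have hlevy : ∀ᵐ ω ∂P, Tendsto (fun n => (P[l' | G n]) ω) atTop (𝓝 (l' ω)) := by
        have h := Integrable.tendsto_ae_condExp (ℱ := ⟨G, hGmono, hGle⟩) hl'int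
          (Measurable.stronglyMeasurable hsmG)
        exact h
      have Tb : Tendsto (fun n => ∫ ω, |(P[l' | G n]) ω - l' ω| ∂P) atTop (𝓝 0) := by
        have hdc := tendsto_integral_of_dominated_convergence (μ := P)
          (F := fun n ω => |(P[l' | G n]) ω - l' ω|) (f := fun _ => (0:ℝ))
          (bound := fun _ => 2 * max C 0)
          (fun n => ((hγm n).sub hl'sm).norm)
          (integrable_const _)
          (fun n => by
            filter_upwards [hγb n] with ω h1
            rw [Real.norm_eq_abs, abs_abs]
            linarith [abs_sub'' ((P[l' | G n]) ω) (l' ω), hl'b ω])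
          (by
            filter_upwards [hlevy] with ω h1
            simpa using (h1.sub (tendsto_const_nhds (x := l' ω))).abs)
        simpa using hdc
      have hchain : ∀ n, ∫ ω, |(P[(fun ω => f (X n ω)) | G n]) ω - l' ω| ∂P
          ≤ (∫ ω, |predMean P X f n ω - l' ω| ∂P)
            + ∫ ω, |(P[l' | G n]) ω - l' ω| ∂P := by
        intro n
        have hint1 : Integrable
            (fun ω => |(P[(fun ω => f (X n ω)) | G n]) ω - (P[l' | G n]) ω|) P :=
          ((hβint n).sub (hγint n)).abs
        have hint2 : Integrable (fun ω => |(P[l' | G n]) ω - l' ω|) P :=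
          ((hγint n).sub hl'int).abs
        have step : ∫ ω, |(P[(fun ω => f (X n ω)) | G n]) ω - l' ω| ∂P
            ≤ ∫ ω, (|(P[(fun ω => f (X n ω)) | G n]) ω - (P[l' | G n]) ω|
              + |(P[l' | G n]) ω - l' ω|) ∂P := by
          refine integral_mono_ae (((hβint n).sub hl'int).abs) (hint1.add hint2) ?_
          exact Eventually.of_forall fun ω => abs_sub_le _ _ _
        rw [integral_add hint1 hint2] at step
        exact step.trans (add_le_add_left (Ta n) _)
      have Tβ : Tendsto (fun n => ∫ ω, |(P[(fun ω => f (X n ω)) | G n]) ω - l' ω| ∂P)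
          atTop (𝓝 0) := by
        have hub : Tendsto (fun n => (∫ ω, |predMean P X f n ω - l' ω| ∂P)
            + ∫ ω, |(P[l' | G n]) ω - l' ω| ∂P) atTop (𝓝 0) := by
          simpa using T.add Tb
        exact tendsto_of_tendsto_of_tendsto_of_le_of_le tendsto_const_nhds hub
          (fun n => integral_nonneg fun ω => abs_nonneg _) hchain
      exact tendsto_integral_sq P hC'0 hβm hl'sm hβb (Eventually.of_forall hl'b) Tβ
end
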